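/- Let q(n) := p(n)/p(n−1) for n ≥ 1. Then q(27) ≥ q(n) for every integer n ≥ 27; equivalently, p(27)·p(n−1) ≥ p(26)·p(n) for every n ≥ 27. -/

import Mathlib

/-- The partition function `p n`. -/
def p (n : ℕ) : ℕ := Fintype.card (Nat.Partition n)

open Finset

open Finset

/-- Number of partitions of `n` with all parts `≥ k`. -/
def V (k n : ℕ) : ℕ :=
  (Finset.univ.filter (fun P : Nat.Partition n => ∀ i ∈ P.parts, k ≤ i)).card

lemma V_one (n : ℕ) : V 1 n = p n := by
  rw [V, p, Fintype.card]
  congr 1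
  rw [Finset.filter_eq_self]
  intro P _ i hi
  exact P.parts_pos hi

lemma V_zero_right (k : ℕ) : V k 0 = 1 := by
  rw [V]
  rw [Finset.filter_eq_self.2 (by
    intro P _ i hi
    simp [Nat.Partition.partition_zero_parts P] at hi)]
  simpa using Fintype.card_unique

lemma V_eq_zero (k n : ℕ) (h1 : 1 ≤ n) (h2 : n < k) : V k n = 0 := by
  rw [V, Finset.card_eq_zero, Finset.filter_eq_empty_iff]
  intro P _ hP
  -- parts nonempty since sum = n ≥ 1
  have hne : P.parts ≠ 0 := by
    intro h0
    have := P.parts_sum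
    rw [h0] at this
    simp at this
    omega
  obtain ⟨i, hi⟩ := Multiset.exists_mem_of_ne_zero hne
  have h3 : k ≤ i := hP i hi
  have h4 : i ≤ P.parts.sum := Multiset.le_sum_of_mem hi
  rw [P.parts_sum] at h4
  omega


lemma V_rec (k n : ℕ) (hk : 1 ≤ k) (hkn : k ≤ n) :
    V k n = V k (n - k) + V (k + 1) n := by
  classical
  rw [V, V, V]
  have hsplit :
      (Finset.univ.filter (fun P : Nat.Partition n => ∀ i ∈ P.parts, k ≤ i)) =
        (Finset.univ.filter (fun P : Nat.Partition n => (∀ i ∈ P.parts, k ≤ i) ∧ k ∈ P.parts)) ∪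
        (Finset.univ.filter (fun P : Nat.Partition n => ∀ i ∈ P.parts, k + 1 ≤ i)) := by
    ext P
    simp only [Finset.mem_filter, Finset.mem_union, Finset.mem_univ, true_and]
    constructor
    · intro h
      by_cases hmem : k ∈ P.parts
      · exact Or.inl ⟨h, hmem⟩
      · refine Or.inr fun i hi => ?_
        have h2 := h i hi
        rcases Nat.lt_or_ge i (k+1) with h1 | h1
        · exfalso; have : i = k := by omega
          subst this; exact hmem hi
        · exact h1
    · rintro (⟨h, _⟩ | h)
      · exact h
      · intro i hi; exact le_trans (Nat.le_succ k) (h i hi)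
  rw [hsplit, Finset.card_union_of_disjoint]
  · congr 1
    refine Finset.card_bij (fun P hP => ⟨P.parts.erase k, ?_, ?_⟩) ?_ ?_ ?_
    · intro i hi
      exact P.parts_pos (Multiset.mem_of_mem_erase hi)
    · rw [Finset.mem_filter] at hP
      have hmem : k ∈ P.parts := hP.2.2
      have hc : k ::ₘ P.parts.erase k = P.parts := Multiset.cons_erase hmem
      have : (k ::ₘ P.parts.erase k).sum = n := by rw [hc]; exact P.parts_sum
      rw [Multiset.sum_cons] at this
      omega
    · intro P hP
      rw [Finset.mem_filter] at hP ⊢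
      refine ⟨Finset.mem_univ _, ?_⟩
      intro i hi
      exact hP.2.1 i (Multiset.mem_of_mem_erase hi)
    · intro P hP Q hQ h
      rw [Finset.mem_filter] at hP hQ
      have h' : P.parts.erase k = Q.parts.erase k := congrArg Nat.Partition.parts h
      apply Nat.Partition.ext
      rw [← Multiset.cons_erase hP.2.2, ← Multiset.cons_erase hQ.2.2, h']
    · intro Q hQ
      rw [Finset.mem_filter] at hQ
      refine ⟨⟨k ::ₘ Q.parts, ?_, ?_⟩, ?_, ?_⟩
      · intro i hi
        rcases Multiset.mem_cons.1 hi with h | h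
        · omega
        · exact Q.parts_pos h
      · rw [Multiset.sum_cons, Q.parts_sum]; omega
      · rw [Finset.mem_filter]
        refine ⟨Finset.mem_univ _, ?_, Multiset.mem_cons_self _ _⟩
        intro i hi
        rcases Multiset.mem_cons.1 hi with h | h
        · omega
        · exact hQ.2 i h
      · apply Nat.Partition.ext
        simp [Multiset.erase_cons_head]
  · rw [Finset.disjoint_filter]
    rintro P _ ⟨_, hmem⟩ hall
    have := hall k hmem
    omega


lemma parts_structure {k n : ℕ} (hpos : 1 ≤ n) (hn : n < 3 * k)
    (P : Nat.Partition n) (hP : ∀ i ∈ P.parts, k ≤ i) :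
    P.parts = {n} ∨ ∃ a, k ≤ a ∧ 2 * a ≤ n ∧ P.parts = {a, n - a} := by
  have hne : P.parts ≠ 0 := by
    intro h0
    have := P.parts_sum; rw [h0] at this; simp at this; omega
  obtain ⟨a, ha⟩ := Multiset.exists_mem_of_ne_zero hne
  obtain ⟨t, ht⟩ := Multiset.exists_cons_of_mem ha
  rcases Multiset.empty_or_exists_mem t with h0 | ⟨b, hb⟩
  · left
    have hsum := P.parts_sum
    rw [ht, h0] at hsum
    simp at hsum
    rw [ht, h0, hsum]
    rfl
  · obtain ⟨u, hu⟩ := Multiset.exists_cons_of_mem hb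
    rcases Multiset.empty_or_exists_mem u with h0 | ⟨c, hc⟩
    · -- two parts a, b
      have hsum := P.parts_sum
      rw [ht, hu, h0] at hsum
      simp [Multiset.sum_cons] at hsum
      have hak : k ≤ a := hP a ha
      have hbk : k ≤ b := by
        apply hP b; rw [ht]; exact Multiset.mem_cons_of_mem hb
      right
      rcases Nat.le_total a b with hab | hab
      · exact ⟨a, hak, by omega, by rw [ht, hu, h0]; congr 1; congr 1; omega⟩
      · exact ⟨b, hbk, by omega, by
          rw [ht, hu, h0]
          have : n - b = a := by omega
          rw [this]
          rw [Multiset.cons_swap]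
          rfl⟩
    · -- three parts: contradiction
      exfalso
      have hak : k ≤ a := hP a ha
      have hbk : k ≤ b := by apply hP b; rw [ht]; exact Multiset.mem_cons_of_mem hb
      have hck : k ≤ c := by
        apply hP c; rw [ht, hu]
        exact Multiset.mem_cons_of_mem (Multiset.mem_cons_of_mem hc)
      obtain ⟨w, hw⟩ := Multiset.exists_cons_of_mem hc
      have hsum := P.parts_sum
      rw [ht, hu, hw] at hsum
      simp [Multiset.sum_cons] at hsum
      have : w.sum + (a + (b + c)) = n := by omega
      omega

lemma V_pos (k n : ℕ) (hk : k ≤ n) (hn : 1 ≤ n) : 1 ≤ V k n := by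
  rw [V, Nat.succ_le_iff, Finset.card_pos]
  refine ⟨Nat.Partition.indiscrete n, ?_⟩
  rw [Finset.mem_filter]
  refine ⟨Finset.mem_univ _, ?_⟩
  intro i hi
  rw [Nat.Partition.indiscrete_parts (by omega)] at hi
  rw [Multiset.mem_singleton] at hi
  omega

lemma V_one_eq (k n : ℕ) (hk : k ≤ n) (hn : n < 2 * k) : V k n = 1 := by
  have hk1 : 1 ≤ k := by omega
  have hn1 : 1 ≤ n := by omega
  refine le_antisymm ?_ (V_pos k n hk hn1)
  rw [V]
  apply Finset.card_le_one.2
  intro P hP Q hQ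
  rw [Finset.mem_filter] at hP hQ
  have h3 : n < 3 * k := by omega
  have hPs := parts_structure hn1 h3 P hP.2
  have hQs := parts_structure hn1 h3 Q hQ.2
  have key : ∀ R : Nat.Partition n, (∀ i ∈ R.parts, k ≤ i) → R.parts = {n} := by
    intro R hR
    rcases parts_structure hn1 h3 R hR with h | ⟨a, h1, h2, _⟩
    · exact h
    · omega
  apply Nat.Partition.ext
  rw [key P hP.2, key Q hQ.2]

lemma V_upper (k n : ℕ) (hk : 1 ≤ k) (hn1 : 2 * k ≤ n) (hn : n < 3 * k) :
    V k n + k ≤ n / 2 + 2 := by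
  have hpos : 1 ≤ n := by omega
  have key : ∀ R : Nat.Partition n, (∀ i ∈ R.parts, k ≤ i) →
      (n - R.parts.sup = 0 ∧ R.parts = {n}) ∨
      (k ≤ n - R.parts.sup ∧ 2 * (n - R.parts.sup) ≤ n ∧
        R.parts = {n - R.parts.sup, n - (n - R.parts.sup)}) := by
    intro R hR
    rcases parts_structure hpos hn R hR with h | ⟨a, h1, h2, h3⟩
    · left
      constructor
      · rw [h]; simp [Multiset.sup_singleton]
      · exact h
    · right
      have hsup : R.parts.sup = n - a := by
        rw [h3]
        have hx : ({a, n - a} : Multiset ℕ).sup = max a (n - a) := by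
          simp [Multiset.sup_cons, Multiset.sup_singleton]
        rw [hx]; omega
      have hfa : n - R.parts.sup = a := by omega
      rw [hfa]
      exact ⟨h1, h2, by rw [h3]⟩
  have hcard : V k n ≤ n / 2 + 2 - k := by
    rw [V]
    have hsub : (Finset.univ.filter (fun P : Nat.Partition n => ∀ i ∈ P.parts, k ≤ i)).card ≤
        (insert 0 ((Finset.Icc k (n / 2)))).card := by
      apply Finset.card_le_card_of_injOn (fun P => n - P.parts.sup)
      · intro P hP
        rw [Finset.mem_coe, Finset.mem_filter] at hP
        beta_reduce
        rcases key P hP.2 with ⟨h0, _⟩ | ⟨h1, h2, _⟩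
        · rw [h0]; exact Finset.mem_insert_self _ _
        · apply Finset.mem_insert_of_mem
          rw [Finset.mem_Icc]
          constructor
          · exact h1
          · omega
      · intro P hP Q hQ hfq
        rw [Finset.coe_filter] at hP hQ
        simp only [Set.mem_setOf_eq] at hP hQ
        simp only at hfq
        rcases key P hP.2 with ⟨hP0, hP'⟩ | ⟨hPk, _, hP'⟩ <;>
          rcases key Q hQ.2 with ⟨hQ0, hQ'⟩ | ⟨hQk, _, hQ'⟩
        · apply Nat.Partition.ext; rw [hP', hQ']
        · exfalso; omega
        · exfalso; omega
        · apply Nat.Partition.ext; rw [hP', hQ', hfq]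
    have : (insert 0 ((Finset.Icc k (n / 2)))).card ≤ n / 2 + 2 - k := by
      apply le_trans (Finset.card_insert_le _ _)
      rw [Nat.card_Icc]
      omega
    omega
  omega


/-- partition of `n` into two parts `a` and `n - a`. -/
def twoPart (n a : ℕ) (h1 : 1 ≤ a) (h2 : a < n) : Nat.Partition n where
  parts := {a, n - a}
  parts_pos := by
    intro i hi
    rcases Multiset.mem_cons.1 hi with h | h
    · omega
    · rw [Multiset.mem_singleton] at h; omega
  parts_sum := by
    rw [show ({a, n - a} : Multiset ℕ) = a ::ₘ {n - a} from rfl]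
    rw [Multiset.sum_cons, Multiset.sum_singleton]
    omega

lemma twoPart_parts (n a : ℕ) (h1 : 1 ≤ a) (h2 : a < n) :
    (twoPart n a h1 h2).parts = {a, n - a} := rfl

lemma mem_filter_twoPart (k n a : ℕ) (h1 : 1 ≤ a) (h2 : a < n) (hk : k ≤ a) (hk2 : k ≤ n - a) :
    twoPart n a h1 h2 ∈
      (Finset.univ.filter (fun P : Nat.Partition n => ∀ i ∈ P.parts, k ≤ i)) := by
  rw [Finset.mem_filter]
  refine ⟨Finset.mem_univ _, ?_⟩
  intro i hi
  rw [twoPart_parts] at hi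
  rcases Multiset.mem_cons.1 hi with h | h
  · omega
  · rw [Multiset.mem_singleton] at h; omega

lemma mem_filter_indiscrete (k n : ℕ) (h1 : 1 ≤ n) (hk : k ≤ n) :
    Nat.Partition.indiscrete n ∈
      (Finset.univ.filter (fun P : Nat.Partition n => ∀ i ∈ P.parts, k ≤ i)) := by
  rw [Finset.mem_filter]
  refine ⟨Finset.mem_univ _, ?_⟩
  intro i hi
  rw [Nat.Partition.indiscrete_parts (by omega)] at hi
  rw [Multiset.mem_singleton] at hi
  omega

lemma twoPart_ne_indiscrete (n a : ℕ) (h1 : 1 ≤ a) (h2 : a < n) :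
    twoPart n a h1 h2 ≠ Nat.Partition.indiscrete n := by
  intro h
  have := congrArg Nat.Partition.parts h
  rw [twoPart_parts, Nat.Partition.indiscrete_parts (by omega)] at this
  have : a ∈ ({n} : Multiset ℕ) := by rw [← this]; exact Multiset.mem_cons_self _ _
  rw [Multiset.mem_singleton] at this
  omega

lemma twoPart_ne_twoPart (n a b : ℕ) (ha1 : 1 ≤ a) (ha2 : a < n) (hb1 : 1 ≤ b) (hb2 : b < n)
    (hab : a ≠ b) (hab2 : a ≠ n - b) : twoPart n a ha1 ha2 ≠ twoPart n b hb1 hb2 := by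
  intro h
  have := congrArg Nat.Partition.parts h
  rw [twoPart_parts, twoPart_parts] at this
  have : a ∈ ({b, n - b} : Multiset ℕ) := by rw [← this]; exact Multiset.mem_cons_self _ _
  rcases Multiset.mem_cons.1 this with h' | h'
  · exact hab h'
  · rw [Multiset.mem_singleton] at h'; exact hab2 h'

lemma V_ge_two (k n : ℕ) (hk : 1 ≤ k) (h : 2 * k ≤ n) : 2 ≤ V k n := by
  rw [V]
  have h1 : 1 ≤ k := hk
  have h2 : k < n := by omega
  apply Finset.one_lt_card.2
  exact ⟨twoPart n k h1 h2, mem_filter_twoPart k n k h1 h2 le_rfl (by omega),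
    Nat.Partition.indiscrete n, mem_filter_indiscrete k n (by omega) (by omega),
    twoPart_ne_indiscrete n k h1 h2⟩

lemma V_ge_three (k n : ℕ) (hk : 1 ≤ k) (h : 2 * k + 2 ≤ n) : 3 ≤ V k n := by
  rw [V]
  classical
  have hA : 1 ≤ k := hk
  have hA2 : k < n := by omega
  have hB : 1 ≤ k + 1 := by omega
  have hB2 : k + 1 < n := by omega
  set P1 := twoPart n k hA hA2
  set P2 := twoPart n (k+1) hB hB2
  set P3 := Nat.Partition.indiscrete n
  have hsub : {P1, P2, P3} ⊆
      (Finset.univ.filter (fun P : Nat.Partition n => ∀ i ∈ P.parts, k ≤ i)) := by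
    intro x hx
    simp only [Finset.mem_insert, Finset.mem_singleton] at hx
    rcases hx with h' | h' | h' <;> subst h'
    · exact mem_filter_twoPart k n k hA hA2 le_rfl (by omega)
    · exact mem_filter_twoPart k n (k+1) hB hB2 (by omega) (by omega)
    · exact mem_filter_indiscrete k n (by omega) (by omega)
  refine le_trans ?_ (Finset.card_le_card hsub)
  have h12 : P1 ≠ P2 := twoPart_ne_twoPart n k (k+1) hA hA2 hB hB2 (by omega) (by omega)
  have h13 : P1 ≠ P3 := twoPart_ne_indiscrete n k hA hA2
  have h23 : P2 ≠ P3 := twoPart_ne_indiscrete n (k+1) hB hB2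
  rw [Finset.card_insert_of_notMem (by simp [h12, h13]),
    Finset.card_insert_of_notMem (by simp [h23]), Finset.card_singleton]

lemma V_ge_four (k n : ℕ) (hk : 1 ≤ k) (h : 2 * k + 4 ≤ n) : 4 ≤ V k n := by
  rw [V]
  classical
  have hA : 1 ≤ k := hk
  have hA2 : k < n := by omega
  have hB : 1 ≤ k + 1 := by omega
  have hB2 : k + 1 < n := by omega
  have hC : 1 ≤ k + 2 := by omega
  have hC2 : k + 2 < n := by omega
  set P1 := twoPart n k hA hA2
  set P2 := twoPart n (k+1) hB hB2
  set P0 := twoPart n (k+2) hC hC2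
  set P3 := Nat.Partition.indiscrete n
  have hsub : {P0, P1, P2, P3} ⊆
      (Finset.univ.filter (fun P : Nat.Partition n => ∀ i ∈ P.parts, k ≤ i)) := by
    intro x hx
    simp only [Finset.mem_insert, Finset.mem_singleton] at hx
    rcases hx with h' | h' | h' | h' <;> subst h'
    · exact mem_filter_twoPart k n (k+2) hC hC2 (by omega) (by omega)
    · exact mem_filter_twoPart k n k hA hA2 le_rfl (by omega)
    · exact mem_filter_twoPart k n (k+1) hB hB2 (by omega) (by omega)
    · exact mem_filter_indiscrete k n (by omega) (by omega)
  refine le_trans ?_ (Finset.card_le_card hsub)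
  have h01 : P0 ≠ P1 := twoPart_ne_twoPart n (k+2) k hC hC2 hA hA2 (by omega) (by omega)
  have h02 : P0 ≠ P2 := twoPart_ne_twoPart n (k+2) (k+1) hC hC2 hB hB2 (by omega) (by omega)
  have h12 : P1 ≠ P2 := twoPart_ne_twoPart n k (k+1) hA hA2 hB hB2 (by omega) (by omega)
  have h03 : P0 ≠ P3 := twoPart_ne_indiscrete n (k+2) hC hC2
  have h13 : P1 ≠ P3 := twoPart_ne_indiscrete n k hA hA2
  have h23 : P2 ≠ P3 := twoPart_ne_indiscrete n (k+1) hB hB2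
  rw [Finset.card_insert_of_notMem (by simp [h01, h02, h03]),
    Finset.card_insert_of_notMem (by simp [h12, h13]),
    Finset.card_insert_of_notMem (by simp [h23]), Finset.card_singleton]


attribute [irreducible] V

def S (k n : ℕ) : ℕ := ∑ j ∈ Finset.range k, V k (n - 1 - j)

def I (k n : ℕ) : Prop := 1218 * V (k + 1) n ≤ 287 * S k n

lemma S_split5 (k n : ℕ) (hk : 5 ≤ k) :
    S k n = (V k (n-1) + V k (n-2) + V k (n-3) + V k (n-4) + V k (n-5)) +
      ∑ j ∈ Finset.range (k - 5), V k (n - 6 - j) := by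
  rw [S]
  conv_lhs => rw [Finset.range_eq_Ico, ← Finset.sum_Ico_consecutive _ (Nat.zero_le 5) hk]
  congr 1
  · rw [← Finset.range_eq_Ico]
    rw [Finset.sum_range_succ, Finset.sum_range_succ, Finset.sum_range_succ,
      Finset.sum_range_succ, Finset.sum_range_succ, Finset.sum_range_zero]
    simp only [Nat.sub_zero]
    rw [show n-1-1 = n-2 by omega, show n-1-2 = n-3 by omega,
      show n-1-3 = n-4 by omega, show n-1-4 = n-5 by omega]
    omega
  · rw [Finset.sum_Ico_eq_sum_range]
    apply Finset.sum_congr rfl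
    intro j _
    congr 1
    omega

lemma S_tail_ge (k n : ℕ) (hk : 5 ≤ k) (hn : 2 * k ≤ n) :
    k - 5 ≤ ∑ j ∈ Finset.range (k - 5), V k (n - 6 - j) := by
  calc k - 5 = ∑ _j ∈ Finset.range (k - 5), 1 := by simp
  _ ≤ _ := by
      apply Finset.sum_le_sum
      intro j hj
      rw [Finset.mem_range] at hj
      exact V_pos k (n - 6 - j) (by omega) (by omega)

lemma S_rec (k n : ℕ) (hk : 1 ≤ k) (hn : 2 * k + 1 ≤ n) :
    S k n = S k (n - (k + 1)) + S (k + 1) n := by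
  obtain ⟨m, rfl⟩ : ∃ m, k = m + 1 := ⟨k - 1, by omega⟩
  have step1 : S (m+1) n = S (m+1) (n - (m+1)) +
      ∑ j ∈ Finset.range (m+1), V (m+2) (n - 1 - j) := by
    rw [S]
    have h : ∀ j ∈ Finset.range (m+1),
        V (m+1) (n - 1 - j) = V (m+1) ((n - (m+1)) - 1 - j) + V (m+2) (n - 1 - j) := by
      intro j hj
      rw [Finset.mem_range] at hj
      rw [V_rec (m+1) (n - 1 - j) (by omega) (by omega)]
      have e1 : n - 1 - j - (m+1) = (n - (m+1)) - 1 - j := by omega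
      rw [e1]
    rw [Finset.sum_congr rfl h, Finset.sum_add_distrib]
    rfl
  have step2 : S (m+2) n = (∑ j ∈ Finset.range (m+1), V (m+2) (n - 1 - j)) +
      V (m+2) (n - (m+2)) := by
    rw [S, Finset.sum_range_succ]
    have e : n - 1 - (m+1) = n - (m+2) := by omega
    rw [e]
  have step3 : S (m+1) (n - (m+1)) =
      (∑ j ∈ Finset.range m, V (m+1) (n - (m+3) - j)) + V (m+1) (n - (m+2)) := by
    rw [S, Finset.sum_range_succ']
    have h1 : ∀ j ∈ Finset.range m,
        V (m+1) (n - (m+1) - 1 - (j+1)) = V (m+1) (n - (m+3) - j) := by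
      intro j _; congr 1 <;> omega
    rw [Finset.sum_congr rfl h1]
    have h2 : n - (m+1) - 1 - 0 = n - (m+2) := by omega
    rw [h2]
  have step4 : S (m+1) (n - (m+2)) =
      (∑ j ∈ Finset.range m, V (m+1) (n - (m+3) - j)) + V (m+1) (n - (2*m+3)) := by
    rw [S, Finset.sum_range_succ]
    have h1 : ∀ j ∈ Finset.range m,
        V (m+1) (n - (m+2) - 1 - j) = V (m+1) (n - (m+3) - j) := by
      intro j _; congr 1 <;> omega
    rw [Finset.sum_congr rfl h1]
    have h2 : n - (m+2) - 1 - m = n - (2*m+3) := by omega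
    rw [h2]
  have step5 : V (m+1) (n - (m+2)) = V (m+1) (n - (2*m+3)) + V (m+2) (n - (m+2)) := by
    rw [V_rec (m+1) (n - (m+2)) (by omega) (by omega)]
    congr 2
    omega
  have e2 : n - (m + 1) - (m + 1) = n - (2*m+3) + 1 := by omega
  -- final : combine
  have goal1 : S (m+1) (n - (m+1)) = S (m+1) (n - (m+2)) + V (m+2) (n - (m+2)) := by omega
  have e3 : n - (m + 1 + 1) = n - (m+2) := by norm_num
  rw [step1, step2, goal1, e3]
  ring

theorem I_high (k n : ℕ) (hk : 7 ≤ k) (hn : k + 5 ≤ n) : I k n := by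
  rcases Nat.lt_or_ge n (2 * k + 2) with hT | h1
  · -- case T : k + 5 ≤ n ≤ 2k + 1
    rw [I, V_one_eq (k+1) n (by omega) (by omega)]
    have h5 : 5 ≤ S k n := by
      rw [S_split5 k n (by omega)]
      have e1 : 1 ≤ V k (n-1) := V_pos _ _ (by omega) (by omega)
      have e2 : 1 ≤ V k (n-2) := V_pos _ _ (by omega) (by omega)
      have e3 : 1 ≤ V k (n-3) := V_pos _ _ (by omega) (by omega)
      have e4 : 1 ≤ V k (n-4) := V_pos _ _ (by omega) (by omega)
      have e5 : 1 ≤ V k (n-5) := V_pos _ _ (by omega) (by omega)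
      omega
    omega
  rcases Nat.lt_or_ge n (2 * k + 6) with hM | h2
  · have hcase : n = 2*k+2 ∨ n = 2*k+3 ∨ n = 2*k+4 ∨ n = 2*k+5 := by omega
    rcases hcase with rfl | rfl | rfl | rfl
    · rw [I]
      have hup : V (k+1) (2*k+2) + (k+1) ≤ (2*k+2) / 2 + 2 :=
        V_upper (k+1) (2*k+2) (by omega) (by omega) (by omega)
      have htail := S_tail_ge k (2*k+2) (by omega) (by omega)
      rw [S_split5 k (2*k+2) (by omega)]
      have e1 : 2 ≤ V k (2*k+2-1) := V_ge_two _ _ (by omega) (by omega)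
      have e2 : 2 ≤ V k (2*k+2-2) := V_ge_two _ _ (by omega) (by omega)
      have e3 : 1 ≤ V k (2*k+2-3) := V_pos _ _ (by omega) (by omega)
      have e4 : 1 ≤ V k (2*k+2-4) := V_pos _ _ (by omega) (by omega)
      have e5 : 1 ≤ V k (2*k+2-5) := V_pos _ _ (by omega) (by omega)
      omega
    · rw [I]
      have hup : V (k+1) (2*k+3) + (k+1) ≤ (2*k+3) / 2 + 2 :=
        V_upper (k+1) (2*k+3) (by omega) (by omega) (by omega)
      have htail := S_tail_ge k (2*k+3) (by omega) (by omega)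
      rw [S_split5 k (2*k+3) (by omega)]
      have e1 : 3 ≤ V k (2*k+3-1) := V_ge_three _ _ (by omega) (by omega)
      have e2 : 2 ≤ V k (2*k+3-2) := V_ge_two _ _ (by omega) (by omega)
      have e3 : 2 ≤ V k (2*k+3-3) := V_ge_two _ _ (by omega) (by omega)
      have e4 : 1 ≤ V k (2*k+3-4) := V_pos _ _ (by omega) (by omega)
      have e5 : 1 ≤ V k (2*k+3-5) := V_pos _ _ (by omega) (by omega)
      omega
    · rw [I]
      have hup : V (k+1) (2*k+4) + (k+1) ≤ (2*k+4) / 2 + 2 :=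
        V_upper (k+1) (2*k+4) (by omega) (by omega) (by omega)
      have htail := S_tail_ge k (2*k+4) (by omega) (by omega)
      rw [S_split5 k (2*k+4) (by omega)]
      have e1 : 3 ≤ V k (2*k+4-1) := V_ge_three _ _ (by omega) (by omega)
      have e2 : 3 ≤ V k (2*k+4-2) := V_ge_three _ _ (by omega) (by omega)
      have e3 : 2 ≤ V k (2*k+4-3) := V_ge_two _ _ (by omega) (by omega)
      have e4 : 2 ≤ V k (2*k+4-4) := V_ge_two _ _ (by omega) (by omega)
      have e5 : 1 ≤ V k (2*k+4-5) := V_pos _ _ (by omega) (by omega)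
      omega
    · rw [I]
      have hup : V (k+1) (2*k+5) + (k+1) ≤ (2*k+5) / 2 + 2 :=
        V_upper (k+1) (2*k+5) (by omega) (by omega) (by omega)
      have htail := S_tail_ge k (2*k+5) (by omega) (by omega)
      rw [S_split5 k (2*k+5) (by omega)]
      have e1 : 4 ≤ V k (2*k+5-1) := V_ge_four _ _ (by omega) (by omega)
      have e2 : 3 ≤ V k (2*k+5-2) := V_ge_three _ _ (by omega) (by omega)
      have e3 : 3 ≤ V k (2*k+5-3) := V_ge_three _ _ (by omega) (by omega)
      have e4 : 2 ≤ V k (2*k+5-4) := V_ge_two _ _ (by omega) (by omega)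
      have e5 : 2 ≤ V k (2*k+5-5) := V_ge_two _ _ (by omega) (by omega)
      omega
  · -- recursive case : n ≥ 2k+6
    have ih1 : I k (n - (k+1)) := I_high k (n - (k+1)) hk (by omega)
    have ih2 : I (k+1) n := I_high (k+1) n (by omega) (by omega)
    rw [I] at ih1 ih2 ⊢
    rw [V_rec (k+1) n (by omega) (by omega)]
    rw [S_rec k n (by omega) (by omega)]
    omega
termination_by 2 * n - k
decreasing_by
  · omega
  · omega


lemma V_1_0 : V 1 0 = 1 := V_zero_right 1

lemma V_1_1 : V 1 1 = 1 := V_one_eq 1 1 (by norm_num) (by norm_num)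

lemma V_2_2 : V 2 2 = 1 := V_one_eq 2 2 (by norm_num) (by norm_num)

lemma V_1_2 : V 1 2 = 2 := by
  rw [V_rec 1 2 (by norm_num) (by norm_num)]
  norm_num [V_1_1, V_2_2]

lemma V_3_3 : V 3 3 = 1 := V_one_eq 3 3 (by norm_num) (by norm_num)

lemma V_2_3 : V 2 3 = 1 := V_one_eq 2 3 (by norm_num) (by norm_num)

lemma V_1_3 : V 1 3 = 3 := by
  rw [V_rec 1 3 (by norm_num) (by norm_num)]
  norm_num [V_1_2, V_2_3]

lemma V_4_4 : V 4 4 = 1 := V_one_eq 4 4 (by norm_num) (by norm_num)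

lemma V_3_4 : V 3 4 = 1 := V_one_eq 3 4 (by norm_num) (by norm_num)

lemma V_2_4 : V 2 4 = 2 := by
  rw [V_rec 2 4 (by norm_num) (by norm_num)]
  norm_num [V_2_2, V_3_4]

lemma V_1_4 : V 1 4 = 5 := by
  rw [V_rec 1 4 (by norm_num) (by norm_num)]
  norm_num [V_1_3, V_2_4]

lemma V_5_5 : V 5 5 = 1 := V_one_eq 5 5 (by norm_num) (by norm_num)

lemma V_4_5 : V 4 5 = 1 := V_one_eq 4 5 (by norm_num) (by norm_num)

lemma V_3_5 : V 3 5 = 1 := V_one_eq 3 5 (by norm_num) (by norm_num)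

lemma V_2_5 : V 2 5 = 2 := by
  rw [V_rec 2 5 (by norm_num) (by norm_num)]
  norm_num [V_2_3, V_3_5]

lemma V_1_5 : V 1 5 = 7 := by
  rw [V_rec 1 5 (by norm_num) (by norm_num)]
  norm_num [V_1_4, V_2_5]

lemma V_6_6 : V 6 6 = 1 := V_one_eq 6 6 (by norm_num) (by norm_num)

lemma V_5_6 : V 5 6 = 1 := V_one_eq 5 6 (by norm_num) (by norm_num)

lemma V_4_6 : V 4 6 = 1 := V_one_eq 4 6 (by norm_num) (by norm_num)

lemma V_3_6 : V 3 6 = 2 := by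
  rw [V_rec 3 6 (by norm_num) (by norm_num)]
  norm_num [V_3_3, V_4_6]

lemma V_2_6 : V 2 6 = 4 := by
  rw [V_rec 2 6 (by norm_num) (by norm_num)]
  norm_num [V_2_4, V_3_6]

lemma V_1_6 : V 1 6 = 11 := by
  rw [V_rec 1 6 (by norm_num) (by norm_num)]
  norm_num [V_1_5, V_2_6]

lemma V_7_7 : V 7 7 = 1 := V_one_eq 7 7 (by norm_num) (by norm_num)

lemma V_6_7 : V 6 7 = 1 := V_one_eq 6 7 (by norm_num) (by norm_num)

lemma V_5_7 : V 5 7 = 1 := V_one_eq 5 7 (by norm_num) (by norm_num)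

lemma V_4_7 : V 4 7 = 1 := V_one_eq 4 7 (by norm_num) (by norm_num)

lemma V_3_7 : V 3 7 = 2 := by
  rw [V_rec 3 7 (by norm_num) (by norm_num)]
  norm_num [V_3_4, V_4_7]

lemma V_2_7 : V 2 7 = 4 := by
  rw [V_rec 2 7 (by norm_num) (by norm_num)]
  norm_num [V_2_5, V_3_7]

lemma V_1_7 : V 1 7 = 15 := by
  rw [V_rec 1 7 (by norm_num) (by norm_num)]
  norm_num [V_1_6, V_2_7]

lemma V_8_8 : V 8 8 = 1 := V_one_eq 8 8 (by norm_num) (by norm_num)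

lemma V_7_8 : V 7 8 = 1 := V_one_eq 7 8 (by norm_num) (by norm_num)

lemma V_6_8 : V 6 8 = 1 := V_one_eq 6 8 (by norm_num) (by norm_num)

lemma V_5_8 : V 5 8 = 1 := V_one_eq 5 8 (by norm_num) (by norm_num)

lemma V_4_8 : V 4 8 = 2 := by
  rw [V_rec 4 8 (by norm_num) (by norm_num)]
  norm_num [V_4_4, V_5_8]

lemma V_3_8 : V 3 8 = 3 := by
  rw [V_rec 3 8 (by norm_num) (by norm_num)]
  norm_num [V_3_5, V_4_8]

lemma V_2_8 : V 2 8 = 7 := by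
  rw [V_rec 2 8 (by norm_num) (by norm_num)]
  norm_num [V_2_6, V_3_8]

lemma V_1_8 : V 1 8 = 22 := by
  rw [V_rec 1 8 (by norm_num) (by norm_num)]
  norm_num [V_1_7, V_2_8]

lemma V_9_9 : V 9 9 = 1 := V_one_eq 9 9 (by norm_num) (by norm_num)

lemma V_8_9 : V 8 9 = 1 := V_one_eq 8 9 (by norm_num) (by norm_num)

lemma V_7_9 : V 7 9 = 1 := V_one_eq 7 9 (by norm_num) (by norm_num)

lemma V_6_9 : V 6 9 = 1 := V_one_eq 6 9 (by norm_num) (by norm_num)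

lemma V_5_9 : V 5 9 = 1 := V_one_eq 5 9 (by norm_num) (by norm_num)

lemma V_4_9 : V 4 9 = 2 := by
  rw [V_rec 4 9 (by norm_num) (by norm_num)]
  norm_num [V_4_5, V_5_9]

lemma V_3_9 : V 3 9 = 4 := by
  rw [V_rec 3 9 (by norm_num) (by norm_num)]
  norm_num [V_3_6, V_4_9]

lemma V_2_9 : V 2 9 = 8 := by
  rw [V_rec 2 9 (by norm_num) (by norm_num)]
  norm_num [V_2_7, V_3_9]

lemma V_1_9 : V 1 9 = 30 := by
  rw [V_rec 1 9 (by norm_num) (by norm_num)]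
  norm_num [V_1_8, V_2_9]

lemma V_10_10 : V 10 10 = 1 := V_one_eq 10 10 (by norm_num) (by norm_num)

lemma V_9_10 : V 9 10 = 1 := V_one_eq 9 10 (by norm_num) (by norm_num)

lemma V_8_10 : V 8 10 = 1 := V_one_eq 8 10 (by norm_num) (by norm_num)

lemma V_7_10 : V 7 10 = 1 := V_one_eq 7 10 (by norm_num) (by norm_num)

lemma V_6_10 : V 6 10 = 1 := V_one_eq 6 10 (by norm_num) (by norm_num)

lemma V_5_10 : V 5 10 = 2 := by
  rw [V_rec 5 10 (by norm_num) (by norm_num)]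
  norm_num [V_5_5, V_6_10]

lemma V_4_10 : V 4 10 = 3 := by
  rw [V_rec 4 10 (by norm_num) (by norm_num)]
  norm_num [V_4_6, V_5_10]

lemma V_3_10 : V 3 10 = 5 := by
  rw [V_rec 3 10 (by norm_num) (by norm_num)]
  norm_num [V_3_7, V_4_10]

lemma V_2_10 : V 2 10 = 12 := by
  rw [V_rec 2 10 (by norm_num) (by norm_num)]
  norm_num [V_2_8, V_3_10]

lemma V_1_10 : V 1 10 = 42 := by
  rw [V_rec 1 10 (by norm_num) (by norm_num)]
  norm_num [V_1_9, V_2_10]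

lemma V_11_11 : V 11 11 = 1 := V_one_eq 11 11 (by norm_num) (by norm_num)

lemma V_10_11 : V 10 11 = 1 := V_one_eq 10 11 (by norm_num) (by norm_num)

lemma V_9_11 : V 9 11 = 1 := V_one_eq 9 11 (by norm_num) (by norm_num)

lemma V_8_11 : V 8 11 = 1 := V_one_eq 8 11 (by norm_num) (by norm_num)

lemma V_7_11 : V 7 11 = 1 := V_one_eq 7 11 (by norm_num) (by norm_num)

lemma V_6_11 : V 6 11 = 1 := V_one_eq 6 11 (by norm_num) (by norm_num)

lemma V_5_11 : V 5 11 = 2 := by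
  rw [V_rec 5 11 (by norm_num) (by norm_num)]
  norm_num [V_5_6, V_6_11]

lemma V_4_11 : V 4 11 = 3 := by
  rw [V_rec 4 11 (by norm_num) (by norm_num)]
  norm_num [V_4_7, V_5_11]

lemma V_3_11 : V 3 11 = 6 := by
  rw [V_rec 3 11 (by norm_num) (by norm_num)]
  norm_num [V_3_8, V_4_11]

lemma V_2_11 : V 2 11 = 14 := by
  rw [V_rec 2 11 (by norm_num) (by norm_num)]
  norm_num [V_2_9, V_3_11]

lemma V_1_11 : V 1 11 = 56 := by
  rw [V_rec 1 11 (by norm_num) (by norm_num)]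
  norm_num [V_1_10, V_2_11]

lemma V_12_12 : V 12 12 = 1 := V_one_eq 12 12 (by norm_num) (by norm_num)

lemma V_11_12 : V 11 12 = 1 := V_one_eq 11 12 (by norm_num) (by norm_num)

lemma V_10_12 : V 10 12 = 1 := V_one_eq 10 12 (by norm_num) (by norm_num)

lemma V_9_12 : V 9 12 = 1 := V_one_eq 9 12 (by norm_num) (by norm_num)

lemma V_8_12 : V 8 12 = 1 := V_one_eq 8 12 (by norm_num) (by norm_num)

lemma V_7_12 : V 7 12 = 1 := V_one_eq 7 12 (by norm_num) (by norm_num)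

lemma V_6_12 : V 6 12 = 2 := by
  rw [V_rec 6 12 (by norm_num) (by norm_num)]
  norm_num [V_6_6, V_7_12]

lemma V_5_12 : V 5 12 = 3 := by
  rw [V_rec 5 12 (by norm_num) (by norm_num)]
  norm_num [V_5_7, V_6_12]

lemma V_4_12 : V 4 12 = 5 := by
  rw [V_rec 4 12 (by norm_num) (by norm_num)]
  norm_num [V_4_8, V_5_12]

lemma V_3_12 : V 3 12 = 9 := by
  rw [V_rec 3 12 (by norm_num) (by norm_num)]
  norm_num [V_3_9, V_4_12]

lemma V_2_12 : V 2 12 = 21 := by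
  rw [V_rec 2 12 (by norm_num) (by norm_num)]
  norm_num [V_2_10, V_3_12]

lemma V_1_12 : V 1 12 = 77 := by
  rw [V_rec 1 12 (by norm_num) (by norm_num)]
  norm_num [V_1_11, V_2_12]

lemma V_13_13 : V 13 13 = 1 := V_one_eq 13 13 (by norm_num) (by norm_num)

lemma V_12_13 : V 12 13 = 1 := V_one_eq 12 13 (by norm_num) (by norm_num)

lemma V_11_13 : V 11 13 = 1 := V_one_eq 11 13 (by norm_num) (by norm_num)

lemma V_10_13 : V 10 13 = 1 := V_one_eq 10 13 (by norm_num) (by norm_num)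

lemma V_9_13 : V 9 13 = 1 := V_one_eq 9 13 (by norm_num) (by norm_num)

lemma V_8_13 : V 8 13 = 1 := V_one_eq 8 13 (by norm_num) (by norm_num)

lemma V_7_13 : V 7 13 = 1 := V_one_eq 7 13 (by norm_num) (by norm_num)

lemma V_6_13 : V 6 13 = 2 := by
  rw [V_rec 6 13 (by norm_num) (by norm_num)]
  norm_num [V_6_7, V_7_13]

lemma V_5_13 : V 5 13 = 3 := by
  rw [V_rec 5 13 (by norm_num) (by norm_num)]
  norm_num [V_5_8, V_6_13]

lemma V_4_13 : V 4 13 = 5 := by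
  rw [V_rec 4 13 (by norm_num) (by norm_num)]
  norm_num [V_4_9, V_5_13]

lemma V_3_13 : V 3 13 = 10 := by
  rw [V_rec 3 13 (by norm_num) (by norm_num)]
  norm_num [V_3_10, V_4_13]

lemma V_2_13 : V 2 13 = 24 := by
  rw [V_rec 2 13 (by norm_num) (by norm_num)]
  norm_num [V_2_11, V_3_13]

lemma V_1_13 : V 1 13 = 101 := by
  rw [V_rec 1 13 (by norm_num) (by norm_num)]
  norm_num [V_1_12, V_2_13]

lemma V_14_14 : V 14 14 = 1 := V_one_eq 14 14 (by norm_num) (by norm_num)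

lemma V_13_14 : V 13 14 = 1 := V_one_eq 13 14 (by norm_num) (by norm_num)

lemma V_12_14 : V 12 14 = 1 := V_one_eq 12 14 (by norm_num) (by norm_num)

lemma V_11_14 : V 11 14 = 1 := V_one_eq 11 14 (by norm_num) (by norm_num)

lemma V_10_14 : V 10 14 = 1 := V_one_eq 10 14 (by norm_num) (by norm_num)

lemma V_9_14 : V 9 14 = 1 := V_one_eq 9 14 (by norm_num) (by norm_num)

lemma V_8_14 : V 8 14 = 1 := V_one_eq 8 14 (by norm_num) (by norm_num)

lemma V_7_14 : V 7 14 = 2 := by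
  rw [V_rec 7 14 (by norm_num) (by norm_num)]
  norm_num [V_7_7, V_8_14]

lemma V_6_14 : V 6 14 = 3 := by
  rw [V_rec 6 14 (by norm_num) (by norm_num)]
  norm_num [V_6_8, V_7_14]

lemma V_5_14 : V 5 14 = 4 := by
  rw [V_rec 5 14 (by norm_num) (by norm_num)]
  norm_num [V_5_9, V_6_14]

lemma V_4_14 : V 4 14 = 7 := by
  rw [V_rec 4 14 (by norm_num) (by norm_num)]
  norm_num [V_4_10, V_5_14]

lemma V_3_14 : V 3 14 = 13 := by
  rw [V_rec 3 14 (by norm_num) (by norm_num)]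
  norm_num [V_3_11, V_4_14]

lemma V_2_14 : V 2 14 = 34 := by
  rw [V_rec 2 14 (by norm_num) (by norm_num)]
  norm_num [V_2_12, V_3_14]

lemma V_1_14 : V 1 14 = 135 := by
  rw [V_rec 1 14 (by norm_num) (by norm_num)]
  norm_num [V_1_13, V_2_14]

lemma V_15_15 : V 15 15 = 1 := V_one_eq 15 15 (by norm_num) (by norm_num)

lemma V_14_15 : V 14 15 = 1 := V_one_eq 14 15 (by norm_num) (by norm_num)

lemma V_13_15 : V 13 15 = 1 := V_one_eq 13 15 (by norm_num) (by norm_num)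

lemma V_12_15 : V 12 15 = 1 := V_one_eq 12 15 (by norm_num) (by norm_num)

lemma V_11_15 : V 11 15 = 1 := V_one_eq 11 15 (by norm_num) (by norm_num)

lemma V_10_15 : V 10 15 = 1 := V_one_eq 10 15 (by norm_num) (by norm_num)

lemma V_9_15 : V 9 15 = 1 := V_one_eq 9 15 (by norm_num) (by norm_num)

lemma V_8_15 : V 8 15 = 1 := V_one_eq 8 15 (by norm_num) (by norm_num)

lemma V_7_15 : V 7 15 = 2 := by
  rw [V_rec 7 15 (by norm_num) (by norm_num)]
  norm_num [V_7_8, V_8_15]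

lemma V_6_15 : V 6 15 = 3 := by
  rw [V_rec 6 15 (by norm_num) (by norm_num)]
  norm_num [V_6_9, V_7_15]

lemma V_5_15 : V 5 15 = 5 := by
  rw [V_rec 5 15 (by norm_num) (by norm_num)]
  norm_num [V_5_10, V_6_15]

lemma V_4_15 : V 4 15 = 8 := by
  rw [V_rec 4 15 (by norm_num) (by norm_num)]
  norm_num [V_4_11, V_5_15]

lemma V_3_15 : V 3 15 = 17 := by
  rw [V_rec 3 15 (by norm_num) (by norm_num)]
  norm_num [V_3_12, V_4_15]

lemma V_2_15 : V 2 15 = 41 := by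
  rw [V_rec 2 15 (by norm_num) (by norm_num)]
  norm_num [V_2_13, V_3_15]

lemma V_1_15 : V 1 15 = 176 := by
  rw [V_rec 1 15 (by norm_num) (by norm_num)]
  norm_num [V_1_14, V_2_15]

lemma V_16_16 : V 16 16 = 1 := V_one_eq 16 16 (by norm_num) (by norm_num)

lemma V_15_16 : V 15 16 = 1 := V_one_eq 15 16 (by norm_num) (by norm_num)

lemma V_14_16 : V 14 16 = 1 := V_one_eq 14 16 (by norm_num) (by norm_num)

lemma V_13_16 : V 13 16 = 1 := V_one_eq 13 16 (by norm_num) (by norm_num)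

lemma V_12_16 : V 12 16 = 1 := V_one_eq 12 16 (by norm_num) (by norm_num)

lemma V_11_16 : V 11 16 = 1 := V_one_eq 11 16 (by norm_num) (by norm_num)

lemma V_10_16 : V 10 16 = 1 := V_one_eq 10 16 (by norm_num) (by norm_num)

lemma V_9_16 : V 9 16 = 1 := V_one_eq 9 16 (by norm_num) (by norm_num)

lemma V_8_16 : V 8 16 = 2 := by
  rw [V_rec 8 16 (by norm_num) (by norm_num)]
  norm_num [V_8_8, V_9_16]

lemma V_7_16 : V 7 16 = 3 := by
  rw [V_rec 7 16 (by norm_num) (by norm_num)]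
  norm_num [V_7_9, V_8_16]

lemma V_6_16 : V 6 16 = 4 := by
  rw [V_rec 6 16 (by norm_num) (by norm_num)]
  norm_num [V_6_10, V_7_16]

lemma V_5_16 : V 5 16 = 6 := by
  rw [V_rec 5 16 (by norm_num) (by norm_num)]
  norm_num [V_5_11, V_6_16]

lemma V_4_16 : V 4 16 = 11 := by
  rw [V_rec 4 16 (by norm_num) (by norm_num)]
  norm_num [V_4_12, V_5_16]

lemma V_3_16 : V 3 16 = 21 := by
  rw [V_rec 3 16 (by norm_num) (by norm_num)]
  norm_num [V_3_13, V_4_16]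

lemma V_2_16 : V 2 16 = 55 := by
  rw [V_rec 2 16 (by norm_num) (by norm_num)]
  norm_num [V_2_14, V_3_16]

lemma V_1_16 : V 1 16 = 231 := by
  rw [V_rec 1 16 (by norm_num) (by norm_num)]
  norm_num [V_1_15, V_2_16]

lemma V_17_17 : V 17 17 = 1 := V_one_eq 17 17 (by norm_num) (by norm_num)

lemma V_16_17 : V 16 17 = 1 := V_one_eq 16 17 (by norm_num) (by norm_num)

lemma V_15_17 : V 15 17 = 1 := V_one_eq 15 17 (by norm_num) (by norm_num)

lemma V_14_17 : V 14 17 = 1 := V_one_eq 14 17 (by norm_num) (by norm_num)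

lemma V_13_17 : V 13 17 = 1 := V_one_eq 13 17 (by norm_num) (by norm_num)

lemma V_12_17 : V 12 17 = 1 := V_one_eq 12 17 (by norm_num) (by norm_num)

lemma V_11_17 : V 11 17 = 1 := V_one_eq 11 17 (by norm_num) (by norm_num)

lemma V_10_17 : V 10 17 = 1 := V_one_eq 10 17 (by norm_num) (by norm_num)

lemma V_9_17 : V 9 17 = 1 := V_one_eq 9 17 (by norm_num) (by norm_num)

lemma V_8_17 : V 8 17 = 2 := by
  rw [V_rec 8 17 (by norm_num) (by norm_num)]
  norm_num [V_8_9, V_9_17]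

lemma V_7_17 : V 7 17 = 3 := by
  rw [V_rec 7 17 (by norm_num) (by norm_num)]
  norm_num [V_7_10, V_8_17]

lemma V_6_17 : V 6 17 = 4 := by
  rw [V_rec 6 17 (by norm_num) (by norm_num)]
  norm_num [V_6_11, V_7_17]

lemma V_5_17 : V 5 17 = 7 := by
  rw [V_rec 5 17 (by norm_num) (by norm_num)]
  norm_num [V_5_12, V_6_17]

lemma V_4_17 : V 4 17 = 12 := by
  rw [V_rec 4 17 (by norm_num) (by norm_num)]
  norm_num [V_4_13, V_5_17]

lemma V_3_17 : V 3 17 = 25 := by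
  rw [V_rec 3 17 (by norm_num) (by norm_num)]
  norm_num [V_3_14, V_4_17]

lemma V_2_17 : V 2 17 = 66 := by
  rw [V_rec 2 17 (by norm_num) (by norm_num)]
  norm_num [V_2_15, V_3_17]

lemma V_1_17 : V 1 17 = 297 := by
  rw [V_rec 1 17 (by norm_num) (by norm_num)]
  norm_num [V_1_16, V_2_17]

lemma V_18_18 : V 18 18 = 1 := V_one_eq 18 18 (by norm_num) (by norm_num)

lemma V_17_18 : V 17 18 = 1 := V_one_eq 17 18 (by norm_num) (by norm_num)

lemma V_16_18 : V 16 18 = 1 := V_one_eq 16 18 (by norm_num) (by norm_num)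

lemma V_15_18 : V 15 18 = 1 := V_one_eq 15 18 (by norm_num) (by norm_num)

lemma V_14_18 : V 14 18 = 1 := V_one_eq 14 18 (by norm_num) (by norm_num)

lemma V_13_18 : V 13 18 = 1 := V_one_eq 13 18 (by norm_num) (by norm_num)

lemma V_12_18 : V 12 18 = 1 := V_one_eq 12 18 (by norm_num) (by norm_num)

lemma V_11_18 : V 11 18 = 1 := V_one_eq 11 18 (by norm_num) (by norm_num)

lemma V_10_18 : V 10 18 = 1 := V_one_eq 10 18 (by norm_num) (by norm_num)

lemma V_9_18 : V 9 18 = 2 := by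
  rw [V_rec 9 18 (by norm_num) (by norm_num)]
  norm_num [V_9_9, V_10_18]

lemma V_8_18 : V 8 18 = 3 := by
  rw [V_rec 8 18 (by norm_num) (by norm_num)]
  norm_num [V_8_10, V_9_18]

lemma V_7_18 : V 7 18 = 4 := by
  rw [V_rec 7 18 (by norm_num) (by norm_num)]
  norm_num [V_7_11, V_8_18]

lemma V_6_18 : V 6 18 = 6 := by
  rw [V_rec 6 18 (by norm_num) (by norm_num)]
  norm_num [V_6_12, V_7_18]

lemma V_5_18 : V 5 18 = 9 := by
  rw [V_rec 5 18 (by norm_num) (by norm_num)]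
  norm_num [V_5_13, V_6_18]

lemma V_4_18 : V 4 18 = 16 := by
  rw [V_rec 4 18 (by norm_num) (by norm_num)]
  norm_num [V_4_14, V_5_18]

lemma V_3_18 : V 3 18 = 33 := by
  rw [V_rec 3 18 (by norm_num) (by norm_num)]
  norm_num [V_3_15, V_4_18]

lemma V_2_18 : V 2 18 = 88 := by
  rw [V_rec 2 18 (by norm_num) (by norm_num)]
  norm_num [V_2_16, V_3_18]

lemma V_1_18 : V 1 18 = 385 := by
  rw [V_rec 1 18 (by norm_num) (by norm_num)]
  norm_num [V_1_17, V_2_18]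

lemma V_19_19 : V 19 19 = 1 := V_one_eq 19 19 (by norm_num) (by norm_num)

lemma V_18_19 : V 18 19 = 1 := V_one_eq 18 19 (by norm_num) (by norm_num)

lemma V_17_19 : V 17 19 = 1 := V_one_eq 17 19 (by norm_num) (by norm_num)

lemma V_16_19 : V 16 19 = 1 := V_one_eq 16 19 (by norm_num) (by norm_num)

lemma V_15_19 : V 15 19 = 1 := V_one_eq 15 19 (by norm_num) (by norm_num)

lemma V_14_19 : V 14 19 = 1 := V_one_eq 14 19 (by norm_num) (by norm_num)

lemma V_13_19 : V 13 19 = 1 := V_one_eq 13 19 (by norm_num) (by norm_num)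

lemma V_12_19 : V 12 19 = 1 := V_one_eq 12 19 (by norm_num) (by norm_num)

lemma V_11_19 : V 11 19 = 1 := V_one_eq 11 19 (by norm_num) (by norm_num)

lemma V_10_19 : V 10 19 = 1 := V_one_eq 10 19 (by norm_num) (by norm_num)

lemma V_9_19 : V 9 19 = 2 := by
  rw [V_rec 9 19 (by norm_num) (by norm_num)]
  norm_num [V_9_10, V_10_19]

lemma V_8_19 : V 8 19 = 3 := by
  rw [V_rec 8 19 (by norm_num) (by norm_num)]
  norm_num [V_8_11, V_9_19]

lemma V_7_19 : V 7 19 = 4 := by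
  rw [V_rec 7 19 (by norm_num) (by norm_num)]
  norm_num [V_7_12, V_8_19]

lemma V_6_19 : V 6 19 = 6 := by
  rw [V_rec 6 19 (by norm_num) (by norm_num)]
  norm_num [V_6_13, V_7_19]

lemma V_5_19 : V 5 19 = 10 := by
  rw [V_rec 5 19 (by norm_num) (by norm_num)]
  norm_num [V_5_14, V_6_19]

lemma V_4_19 : V 4 19 = 18 := by
  rw [V_rec 4 19 (by norm_num) (by norm_num)]
  norm_num [V_4_15, V_5_19]

lemma V_3_19 : V 3 19 = 39 := by
  rw [V_rec 3 19 (by norm_num) (by norm_num)]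
  norm_num [V_3_16, V_4_19]

lemma V_2_19 : V 2 19 = 105 := by
  rw [V_rec 2 19 (by norm_num) (by norm_num)]
  norm_num [V_2_17, V_3_19]

lemma V_1_19 : V 1 19 = 490 := by
  rw [V_rec 1 19 (by norm_num) (by norm_num)]
  norm_num [V_1_18, V_2_19]

lemma V_20_20 : V 20 20 = 1 := V_one_eq 20 20 (by norm_num) (by norm_num)

lemma V_19_20 : V 19 20 = 1 := V_one_eq 19 20 (by norm_num) (by norm_num)

lemma V_18_20 : V 18 20 = 1 := V_one_eq 18 20 (by norm_num) (by norm_num)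

lemma V_17_20 : V 17 20 = 1 := V_one_eq 17 20 (by norm_num) (by norm_num)

lemma V_16_20 : V 16 20 = 1 := V_one_eq 16 20 (by norm_num) (by norm_num)

lemma V_15_20 : V 15 20 = 1 := V_one_eq 15 20 (by norm_num) (by norm_num)

lemma V_14_20 : V 14 20 = 1 := V_one_eq 14 20 (by norm_num) (by norm_num)

lemma V_13_20 : V 13 20 = 1 := V_one_eq 13 20 (by norm_num) (by norm_num)

lemma V_12_20 : V 12 20 = 1 := V_one_eq 12 20 (by norm_num) (by norm_num)

lemma V_11_20 : V 11 20 = 1 := V_one_eq 11 20 (by norm_num) (by norm_num)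

lemma V_10_20 : V 10 20 = 2 := by
  rw [V_rec 10 20 (by norm_num) (by norm_num)]
  norm_num [V_10_10, V_11_20]

lemma V_9_20 : V 9 20 = 3 := by
  rw [V_rec 9 20 (by norm_num) (by norm_num)]
  norm_num [V_9_11, V_10_20]

lemma V_8_20 : V 8 20 = 4 := by
  rw [V_rec 8 20 (by norm_num) (by norm_num)]
  norm_num [V_8_12, V_9_20]

lemma V_7_20 : V 7 20 = 5 := by
  rw [V_rec 7 20 (by norm_num) (by norm_num)]
  norm_num [V_7_13, V_8_20]

lemma V_6_20 : V 6 20 = 8 := by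
  rw [V_rec 6 20 (by norm_num) (by norm_num)]
  norm_num [V_6_14, V_7_20]

lemma V_5_20 : V 5 20 = 13 := by
  rw [V_rec 5 20 (by norm_num) (by norm_num)]
  norm_num [V_5_15, V_6_20]

lemma V_4_20 : V 4 20 = 24 := by
  rw [V_rec 4 20 (by norm_num) (by norm_num)]
  norm_num [V_4_16, V_5_20]

lemma V_3_20 : V 3 20 = 49 := by
  rw [V_rec 3 20 (by norm_num) (by norm_num)]
  norm_num [V_3_17, V_4_20]

lemma V_2_20 : V 2 20 = 137 := by
  rw [V_rec 2 20 (by norm_num) (by norm_num)]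
  norm_num [V_2_18, V_3_20]

lemma V_1_20 : V 1 20 = 627 := by
  rw [V_rec 1 20 (by norm_num) (by norm_num)]
  norm_num [V_1_19, V_2_20]

lemma V_21_21 : V 21 21 = 1 := V_one_eq 21 21 (by norm_num) (by norm_num)

lemma V_20_21 : V 20 21 = 1 := V_one_eq 20 21 (by norm_num) (by norm_num)

lemma V_19_21 : V 19 21 = 1 := V_one_eq 19 21 (by norm_num) (by norm_num)

lemma V_18_21 : V 18 21 = 1 := V_one_eq 18 21 (by norm_num) (by norm_num)

lemma V_17_21 : V 17 21 = 1 := V_one_eq 17 21 (by norm_num) (by norm_num)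

lemma V_16_21 : V 16 21 = 1 := V_one_eq 16 21 (by norm_num) (by norm_num)

lemma V_15_21 : V 15 21 = 1 := V_one_eq 15 21 (by norm_num) (by norm_num)

lemma V_14_21 : V 14 21 = 1 := V_one_eq 14 21 (by norm_num) (by norm_num)

lemma V_13_21 : V 13 21 = 1 := V_one_eq 13 21 (by norm_num) (by norm_num)

lemma V_12_21 : V 12 21 = 1 := V_one_eq 12 21 (by norm_num) (by norm_num)

lemma V_11_21 : V 11 21 = 1 := V_one_eq 11 21 (by norm_num) (by norm_num)

lemma V_10_21 : V 10 21 = 2 := by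
  rw [V_rec 10 21 (by norm_num) (by norm_num)]
  norm_num [V_10_11, V_11_21]

lemma V_9_21 : V 9 21 = 3 := by
  rw [V_rec 9 21 (by norm_num) (by norm_num)]
  norm_num [V_9_12, V_10_21]

lemma V_8_21 : V 8 21 = 4 := by
  rw [V_rec 8 21 (by norm_num) (by norm_num)]
  norm_num [V_8_13, V_9_21]

lemma V_7_21 : V 7 21 = 6 := by
  rw [V_rec 7 21 (by norm_num) (by norm_num)]
  norm_num [V_7_14, V_8_21]

lemma V_6_21 : V 6 21 = 9 := by
  rw [V_rec 6 21 (by norm_num) (by norm_num)]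
  norm_num [V_6_15, V_7_21]

lemma V_5_21 : V 5 21 = 15 := by
  rw [V_rec 5 21 (by norm_num) (by norm_num)]
  norm_num [V_5_16, V_6_21]

lemma V_4_21 : V 4 21 = 27 := by
  rw [V_rec 4 21 (by norm_num) (by norm_num)]
  norm_num [V_4_17, V_5_21]

lemma V_3_21 : V 3 21 = 60 := by
  rw [V_rec 3 21 (by norm_num) (by norm_num)]
  norm_num [V_3_18, V_4_21]

lemma V_2_21 : V 2 21 = 165 := by
  rw [V_rec 2 21 (by norm_num) (by norm_num)]
  norm_num [V_2_19, V_3_21]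

lemma V_1_21 : V 1 21 = 792 := by
  rw [V_rec 1 21 (by norm_num) (by norm_num)]
  norm_num [V_1_20, V_2_21]

lemma V_22_22 : V 22 22 = 1 := V_one_eq 22 22 (by norm_num) (by norm_num)

lemma V_21_22 : V 21 22 = 1 := V_one_eq 21 22 (by norm_num) (by norm_num)

lemma V_20_22 : V 20 22 = 1 := V_one_eq 20 22 (by norm_num) (by norm_num)

lemma V_19_22 : V 19 22 = 1 := V_one_eq 19 22 (by norm_num) (by norm_num)

lemma V_18_22 : V 18 22 = 1 := V_one_eq 18 22 (by norm_num) (by norm_num)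

lemma V_17_22 : V 17 22 = 1 := V_one_eq 17 22 (by norm_num) (by norm_num)

lemma V_16_22 : V 16 22 = 1 := V_one_eq 16 22 (by norm_num) (by norm_num)

lemma V_15_22 : V 15 22 = 1 := V_one_eq 15 22 (by norm_num) (by norm_num)

lemma V_14_22 : V 14 22 = 1 := V_one_eq 14 22 (by norm_num) (by norm_num)

lemma V_13_22 : V 13 22 = 1 := V_one_eq 13 22 (by norm_num) (by norm_num)

lemma V_12_22 : V 12 22 = 1 := V_one_eq 12 22 (by norm_num) (by norm_num)

lemma V_11_22 : V 11 22 = 2 := by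
  rw [V_rec 11 22 (by norm_num) (by norm_num)]
  norm_num [V_11_11, V_12_22]

lemma V_10_22 : V 10 22 = 3 := by
  rw [V_rec 10 22 (by norm_num) (by norm_num)]
  norm_num [V_10_12, V_11_22]

lemma V_9_22 : V 9 22 = 4 := by
  rw [V_rec 9 22 (by norm_num) (by norm_num)]
  norm_num [V_9_13, V_10_22]

lemma V_8_22 : V 8 22 = 5 := by
  rw [V_rec 8 22 (by norm_num) (by norm_num)]
  norm_num [V_8_14, V_9_22]

lemma V_7_22 : V 7 22 = 7 := by
  rw [V_rec 7 22 (by norm_num) (by norm_num)]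
  norm_num [V_7_15, V_8_22]

lemma V_6_22 : V 6 22 = 11 := by
  rw [V_rec 6 22 (by norm_num) (by norm_num)]
  norm_num [V_6_16, V_7_22]

lemma V_5_22 : V 5 22 = 18 := by
  rw [V_rec 5 22 (by norm_num) (by norm_num)]
  norm_num [V_5_17, V_6_22]

lemma V_4_22 : V 4 22 = 34 := by
  rw [V_rec 4 22 (by norm_num) (by norm_num)]
  norm_num [V_4_18, V_5_22]

lemma V_3_22 : V 3 22 = 73 := by
  rw [V_rec 3 22 (by norm_num) (by norm_num)]
  norm_num [V_3_19, V_4_22]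

lemma V_2_22 : V 2 22 = 210 := by
  rw [V_rec 2 22 (by norm_num) (by norm_num)]
  norm_num [V_2_20, V_3_22]

lemma V_1_22 : V 1 22 = 1002 := by
  rw [V_rec 1 22 (by norm_num) (by norm_num)]
  norm_num [V_1_21, V_2_22]

lemma V_23_23 : V 23 23 = 1 := V_one_eq 23 23 (by norm_num) (by norm_num)

lemma V_22_23 : V 22 23 = 1 := V_one_eq 22 23 (by norm_num) (by norm_num)

lemma V_21_23 : V 21 23 = 1 := V_one_eq 21 23 (by norm_num) (by norm_num)

lemma V_20_23 : V 20 23 = 1 := V_one_eq 20 23 (by norm_num) (by norm_num)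

lemma V_19_23 : V 19 23 = 1 := V_one_eq 19 23 (by norm_num) (by norm_num)

lemma V_18_23 : V 18 23 = 1 := V_one_eq 18 23 (by norm_num) (by norm_num)

lemma V_17_23 : V 17 23 = 1 := V_one_eq 17 23 (by norm_num) (by norm_num)

lemma V_16_23 : V 16 23 = 1 := V_one_eq 16 23 (by norm_num) (by norm_num)

lemma V_15_23 : V 15 23 = 1 := V_one_eq 15 23 (by norm_num) (by norm_num)

lemma V_14_23 : V 14 23 = 1 := V_one_eq 14 23 (by norm_num) (by norm_num)

lemma V_13_23 : V 13 23 = 1 := V_one_eq 13 23 (by norm_num) (by norm_num)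

lemma V_12_23 : V 12 23 = 1 := V_one_eq 12 23 (by norm_num) (by norm_num)

lemma V_11_23 : V 11 23 = 2 := by
  rw [V_rec 11 23 (by norm_num) (by norm_num)]
  norm_num [V_11_12, V_12_23]

lemma V_10_23 : V 10 23 = 3 := by
  rw [V_rec 10 23 (by norm_num) (by norm_num)]
  norm_num [V_10_13, V_11_23]

lemma V_9_23 : V 9 23 = 4 := by
  rw [V_rec 9 23 (by norm_num) (by norm_num)]
  norm_num [V_9_14, V_10_23]

lemma V_8_23 : V 8 23 = 5 := by
  rw [V_rec 8 23 (by norm_num) (by norm_num)]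
  norm_num [V_8_15, V_9_23]

lemma V_7_23 : V 7 23 = 8 := by
  rw [V_rec 7 23 (by norm_num) (by norm_num)]
  norm_num [V_7_16, V_8_23]

lemma V_6_23 : V 6 23 = 12 := by
  rw [V_rec 6 23 (by norm_num) (by norm_num)]
  norm_num [V_6_17, V_7_23]

lemma V_5_23 : V 5 23 = 21 := by
  rw [V_rec 5 23 (by norm_num) (by norm_num)]
  norm_num [V_5_18, V_6_23]

lemma V_4_23 : V 4 23 = 39 := by
  rw [V_rec 4 23 (by norm_num) (by norm_num)]
  norm_num [V_4_19, V_5_23]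

lemma V_3_23 : V 3 23 = 88 := by
  rw [V_rec 3 23 (by norm_num) (by norm_num)]
  norm_num [V_3_20, V_4_23]

lemma V_2_23 : V 2 23 = 253 := by
  rw [V_rec 2 23 (by norm_num) (by norm_num)]
  norm_num [V_2_21, V_3_23]

lemma V_1_23 : V 1 23 = 1255 := by
  rw [V_rec 1 23 (by norm_num) (by norm_num)]
  norm_num [V_1_22, V_2_23]

lemma V_24_24 : V 24 24 = 1 := V_one_eq 24 24 (by norm_num) (by norm_num)

lemma V_23_24 : V 23 24 = 1 := V_one_eq 23 24 (by norm_num) (by norm_num)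

lemma V_22_24 : V 22 24 = 1 := V_one_eq 22 24 (by norm_num) (by norm_num)

lemma V_21_24 : V 21 24 = 1 := V_one_eq 21 24 (by norm_num) (by norm_num)

lemma V_20_24 : V 20 24 = 1 := V_one_eq 20 24 (by norm_num) (by norm_num)

lemma V_19_24 : V 19 24 = 1 := V_one_eq 19 24 (by norm_num) (by norm_num)

lemma V_18_24 : V 18 24 = 1 := V_one_eq 18 24 (by norm_num) (by norm_num)

lemma V_17_24 : V 17 24 = 1 := V_one_eq 17 24 (by norm_num) (by norm_num)

lemma V_16_24 : V 16 24 = 1 := V_one_eq 16 24 (by norm_num) (by norm_num)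

lemma V_15_24 : V 15 24 = 1 := V_one_eq 15 24 (by norm_num) (by norm_num)

lemma V_14_24 : V 14 24 = 1 := V_one_eq 14 24 (by norm_num) (by norm_num)

lemma V_13_24 : V 13 24 = 1 := V_one_eq 13 24 (by norm_num) (by norm_num)

lemma V_12_24 : V 12 24 = 2 := by
  rw [V_rec 12 24 (by norm_num) (by norm_num)]
  norm_num [V_12_12, V_13_24]

lemma V_11_24 : V 11 24 = 3 := by
  rw [V_rec 11 24 (by norm_num) (by norm_num)]
  norm_num [V_11_13, V_12_24]

lemma V_10_24 : V 10 24 = 4 := by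
  rw [V_rec 10 24 (by norm_num) (by norm_num)]
  norm_num [V_10_14, V_11_24]

lemma V_9_24 : V 9 24 = 5 := by
  rw [V_rec 9 24 (by norm_num) (by norm_num)]
  norm_num [V_9_15, V_10_24]

lemma V_8_24 : V 8 24 = 7 := by
  rw [V_rec 8 24 (by norm_num) (by norm_num)]
  norm_num [V_8_16, V_9_24]

lemma V_7_24 : V 7 24 = 10 := by
  rw [V_rec 7 24 (by norm_num) (by norm_num)]
  norm_num [V_7_17, V_8_24]

lemma V_6_24 : V 6 24 = 16 := by
  rw [V_rec 6 24 (by norm_num) (by norm_num)]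
  norm_num [V_6_18, V_7_24]

lemma V_5_24 : V 5 24 = 26 := by
  rw [V_rec 5 24 (by norm_num) (by norm_num)]
  norm_num [V_5_19, V_6_24]

lemma V_4_24 : V 4 24 = 50 := by
  rw [V_rec 4 24 (by norm_num) (by norm_num)]
  norm_num [V_4_20, V_5_24]

lemma V_3_24 : V 3 24 = 110 := by
  rw [V_rec 3 24 (by norm_num) (by norm_num)]
  norm_num [V_3_21, V_4_24]

lemma V_2_24 : V 2 24 = 320 := by
  rw [V_rec 2 24 (by norm_num) (by norm_num)]
  norm_num [V_2_22, V_3_24]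

lemma V_1_24 : V 1 24 = 1575 := by
  rw [V_rec 1 24 (by norm_num) (by norm_num)]
  norm_num [V_1_23, V_2_24]

lemma V_25_25 : V 25 25 = 1 := V_one_eq 25 25 (by norm_num) (by norm_num)

lemma V_24_25 : V 24 25 = 1 := V_one_eq 24 25 (by norm_num) (by norm_num)

lemma V_23_25 : V 23 25 = 1 := V_one_eq 23 25 (by norm_num) (by norm_num)

lemma V_22_25 : V 22 25 = 1 := V_one_eq 22 25 (by norm_num) (by norm_num)

lemma V_21_25 : V 21 25 = 1 := V_one_eq 21 25 (by norm_num) (by norm_num)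

lemma V_20_25 : V 20 25 = 1 := V_one_eq 20 25 (by norm_num) (by norm_num)

lemma V_19_25 : V 19 25 = 1 := V_one_eq 19 25 (by norm_num) (by norm_num)

lemma V_18_25 : V 18 25 = 1 := V_one_eq 18 25 (by norm_num) (by norm_num)

lemma V_17_25 : V 17 25 = 1 := V_one_eq 17 25 (by norm_num) (by norm_num)

lemma V_16_25 : V 16 25 = 1 := V_one_eq 16 25 (by norm_num) (by norm_num)

lemma V_15_25 : V 15 25 = 1 := V_one_eq 15 25 (by norm_num) (by norm_num)

lemma V_14_25 : V 14 25 = 1 := V_one_eq 14 25 (by norm_num) (by norm_num)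

lemma V_13_25 : V 13 25 = 1 := V_one_eq 13 25 (by norm_num) (by norm_num)

lemma V_12_25 : V 12 25 = 2 := by
  rw [V_rec 12 25 (by norm_num) (by norm_num)]
  norm_num [V_12_13, V_13_25]

lemma V_11_25 : V 11 25 = 3 := by
  rw [V_rec 11 25 (by norm_num) (by norm_num)]
  norm_num [V_11_14, V_12_25]

lemma V_10_25 : V 10 25 = 4 := by
  rw [V_rec 10 25 (by norm_num) (by norm_num)]
  norm_num [V_10_15, V_11_25]

lemma V_9_25 : V 9 25 = 5 := by
  rw [V_rec 9 25 (by norm_num) (by norm_num)]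
  norm_num [V_9_16, V_10_25]

lemma V_8_25 : V 8 25 = 7 := by
  rw [V_rec 8 25 (by norm_num) (by norm_num)]
  norm_num [V_8_17, V_9_25]

lemma V_7_25 : V 7 25 = 11 := by
  rw [V_rec 7 25 (by norm_num) (by norm_num)]
  norm_num [V_7_18, V_8_25]

lemma V_6_25 : V 6 25 = 17 := by
  rw [V_rec 6 25 (by norm_num) (by norm_num)]
  norm_num [V_6_19, V_7_25]

lemma V_5_25 : V 5 25 = 30 := by
  rw [V_rec 5 25 (by norm_num) (by norm_num)]
  norm_num [V_5_20, V_6_25]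

lemma V_4_25 : V 4 25 = 57 := by
  rw [V_rec 4 25 (by norm_num) (by norm_num)]
  norm_num [V_4_21, V_5_25]

lemma V_3_25 : V 3 25 = 130 := by
  rw [V_rec 3 25 (by norm_num) (by norm_num)]
  norm_num [V_3_22, V_4_25]

lemma V_2_25 : V 2 25 = 383 := by
  rw [V_rec 2 25 (by norm_num) (by norm_num)]
  norm_num [V_2_23, V_3_25]

lemma V_1_25 : V 1 25 = 1958 := by
  rw [V_rec 1 25 (by norm_num) (by norm_num)]
  norm_num [V_1_24, V_2_25]

lemma V_26_26 : V 26 26 = 1 := V_one_eq 26 26 (by norm_num) (by norm_num)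

lemma V_25_26 : V 25 26 = 1 := V_one_eq 25 26 (by norm_num) (by norm_num)

lemma V_24_26 : V 24 26 = 1 := V_one_eq 24 26 (by norm_num) (by norm_num)

lemma V_23_26 : V 23 26 = 1 := V_one_eq 23 26 (by norm_num) (by norm_num)

lemma V_22_26 : V 22 26 = 1 := V_one_eq 22 26 (by norm_num) (by norm_num)

lemma V_21_26 : V 21 26 = 1 := V_one_eq 21 26 (by norm_num) (by norm_num)

lemma V_20_26 : V 20 26 = 1 := V_one_eq 20 26 (by norm_num) (by norm_num)

lemma V_19_26 : V 19 26 = 1 := V_one_eq 19 26 (by norm_num) (by norm_num)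

lemma V_18_26 : V 18 26 = 1 := V_one_eq 18 26 (by norm_num) (by norm_num)

lemma V_17_26 : V 17 26 = 1 := V_one_eq 17 26 (by norm_num) (by norm_num)

lemma V_16_26 : V 16 26 = 1 := V_one_eq 16 26 (by norm_num) (by norm_num)

lemma V_15_26 : V 15 26 = 1 := V_one_eq 15 26 (by norm_num) (by norm_num)

lemma V_14_26 : V 14 26 = 1 := V_one_eq 14 26 (by norm_num) (by norm_num)

lemma V_13_26 : V 13 26 = 2 := by
  rw [V_rec 13 26 (by norm_num) (by norm_num)]
  norm_num [V_13_13, V_14_26]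

lemma V_12_26 : V 12 26 = 3 := by
  rw [V_rec 12 26 (by norm_num) (by norm_num)]
  norm_num [V_12_14, V_13_26]

lemma V_11_26 : V 11 26 = 4 := by
  rw [V_rec 11 26 (by norm_num) (by norm_num)]
  norm_num [V_11_15, V_12_26]

lemma V_10_26 : V 10 26 = 5 := by
  rw [V_rec 10 26 (by norm_num) (by norm_num)]
  norm_num [V_10_16, V_11_26]

lemma V_9_26 : V 9 26 = 6 := by
  rw [V_rec 9 26 (by norm_num) (by norm_num)]
  norm_num [V_9_17, V_10_26]

lemma V_8_26 : V 8 26 = 9 := by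
  rw [V_rec 8 26 (by norm_num) (by norm_num)]
  norm_num [V_8_18, V_9_26]

lemma V_7_26 : V 7 26 = 13 := by
  rw [V_rec 7 26 (by norm_num) (by norm_num)]
  norm_num [V_7_19, V_8_26]

lemma V_6_26 : V 6 26 = 21 := by
  rw [V_rec 6 26 (by norm_num) (by norm_num)]
  norm_num [V_6_20, V_7_26]

lemma V_5_26 : V 5 26 = 36 := by
  rw [V_rec 5 26 (by norm_num) (by norm_num)]
  norm_num [V_5_21, V_6_26]

lemma V_4_26 : V 4 26 = 70 := by
  rw [V_rec 4 26 (by norm_num) (by norm_num)]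
  norm_num [V_4_22, V_5_26]

lemma V_3_26 : V 3 26 = 158 := by
  rw [V_rec 3 26 (by norm_num) (by norm_num)]
  norm_num [V_3_23, V_4_26]

lemma V_2_26 : V 2 26 = 478 := by
  rw [V_rec 2 26 (by norm_num) (by norm_num)]
  norm_num [V_2_24, V_3_26]

lemma V_1_26 : V 1 26 = 2436 := by
  rw [V_rec 1 26 (by norm_num) (by norm_num)]
  norm_num [V_1_25, V_2_26]

lemma V_26_27 : V 26 27 = 1 := V_one_eq 26 27 (by norm_num) (by norm_num)

lemma V_25_27 : V 25 27 = 1 := V_one_eq 25 27 (by norm_num) (by norm_num)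

lemma V_24_27 : V 24 27 = 1 := V_one_eq 24 27 (by norm_num) (by norm_num)

lemma V_23_27 : V 23 27 = 1 := V_one_eq 23 27 (by norm_num) (by norm_num)

lemma V_22_27 : V 22 27 = 1 := V_one_eq 22 27 (by norm_num) (by norm_num)

lemma V_21_27 : V 21 27 = 1 := V_one_eq 21 27 (by norm_num) (by norm_num)

lemma V_20_27 : V 20 27 = 1 := V_one_eq 20 27 (by norm_num) (by norm_num)

lemma V_19_27 : V 19 27 = 1 := V_one_eq 19 27 (by norm_num) (by norm_num)

lemma V_18_27 : V 18 27 = 1 := V_one_eq 18 27 (by norm_num) (by norm_num)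

lemma V_17_27 : V 17 27 = 1 := V_one_eq 17 27 (by norm_num) (by norm_num)

lemma V_16_27 : V 16 27 = 1 := V_one_eq 16 27 (by norm_num) (by norm_num)

lemma V_15_27 : V 15 27 = 1 := V_one_eq 15 27 (by norm_num) (by norm_num)

lemma V_14_27 : V 14 27 = 1 := V_one_eq 14 27 (by norm_num) (by norm_num)

lemma V_13_27 : V 13 27 = 2 := by
  rw [V_rec 13 27 (by norm_num) (by norm_num)]
  norm_num [V_13_14, V_14_27]

lemma V_12_27 : V 12 27 = 3 := by
  rw [V_rec 12 27 (by norm_num) (by norm_num)]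
  norm_num [V_12_15, V_13_27]

lemma V_11_27 : V 11 27 = 4 := by
  rw [V_rec 11 27 (by norm_num) (by norm_num)]
  norm_num [V_11_16, V_12_27]

lemma V_10_27 : V 10 27 = 5 := by
  rw [V_rec 10 27 (by norm_num) (by norm_num)]
  norm_num [V_10_17, V_11_27]

lemma V_9_27 : V 9 27 = 7 := by
  rw [V_rec 9 27 (by norm_num) (by norm_num)]
  norm_num [V_9_18, V_10_27]

lemma V_8_27 : V 8 27 = 10 := by
  rw [V_rec 8 27 (by norm_num) (by norm_num)]
  norm_num [V_8_19, V_9_27]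

lemma V_7_27 : V 7 27 = 15 := by
  rw [V_rec 7 27 (by norm_num) (by norm_num)]
  norm_num [V_7_20, V_8_27]

lemma V_6_27 : V 6 27 = 24 := by
  rw [V_rec 6 27 (by norm_num) (by norm_num)]
  norm_num [V_6_21, V_7_27]

lemma V_5_27 : V 5 27 = 42 := by
  rw [V_rec 5 27 (by norm_num) (by norm_num)]
  norm_num [V_5_22, V_6_27]

lemma V_4_27 : V 4 27 = 81 := by
  rw [V_rec 4 27 (by norm_num) (by norm_num)]
  norm_num [V_4_23, V_5_27]

lemma V_3_27 : V 3 27 = 191 := by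
  rw [V_rec 3 27 (by norm_num) (by norm_num)]
  norm_num [V_3_24, V_4_27]

lemma V_2_27 : V 2 27 = 574 := by
  rw [V_rec 2 27 (by norm_num) (by norm_num)]
  norm_num [V_2_25, V_3_27]

lemma V_1_27 : V 1 27 = 3010 := by
  rw [V_rec 1 27 (by norm_num) (by norm_num)]
  norm_num [V_1_26, V_2_27]

lemma V_25_28 : V 25 28 = 1 := V_one_eq 25 28 (by norm_num) (by norm_num)

lemma V_24_28 : V 24 28 = 1 := V_one_eq 24 28 (by norm_num) (by norm_num)

lemma V_23_28 : V 23 28 = 1 := V_one_eq 23 28 (by norm_num) (by norm_num)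

lemma V_22_28 : V 22 28 = 1 := V_one_eq 22 28 (by norm_num) (by norm_num)

lemma V_21_28 : V 21 28 = 1 := V_one_eq 21 28 (by norm_num) (by norm_num)

lemma V_20_28 : V 20 28 = 1 := V_one_eq 20 28 (by norm_num) (by norm_num)

lemma V_19_28 : V 19 28 = 1 := V_one_eq 19 28 (by norm_num) (by norm_num)

lemma V_18_28 : V 18 28 = 1 := V_one_eq 18 28 (by norm_num) (by norm_num)

lemma V_17_28 : V 17 28 = 1 := V_one_eq 17 28 (by norm_num) (by norm_num)

lemma V_16_28 : V 16 28 = 1 := V_one_eq 16 28 (by norm_num) (by norm_num)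

lemma V_15_28 : V 15 28 = 1 := V_one_eq 15 28 (by norm_num) (by norm_num)

lemma V_14_28 : V 14 28 = 2 := by
  rw [V_rec 14 28 (by norm_num) (by norm_num)]
  norm_num [V_14_14, V_15_28]

lemma V_13_28 : V 13 28 = 3 := by
  rw [V_rec 13 28 (by norm_num) (by norm_num)]
  norm_num [V_13_15, V_14_28]

lemma V_12_28 : V 12 28 = 4 := by
  rw [V_rec 12 28 (by norm_num) (by norm_num)]
  norm_num [V_12_16, V_13_28]

lemma V_11_28 : V 11 28 = 5 := by
  rw [V_rec 11 28 (by norm_num) (by norm_num)]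
  norm_num [V_11_17, V_12_28]

lemma V_10_28 : V 10 28 = 6 := by
  rw [V_rec 10 28 (by norm_num) (by norm_num)]
  norm_num [V_10_18, V_11_28]

lemma V_9_28 : V 9 28 = 8 := by
  rw [V_rec 9 28 (by norm_num) (by norm_num)]
  norm_num [V_9_19, V_10_28]

lemma V_8_28 : V 8 28 = 12 := by
  rw [V_rec 8 28 (by norm_num) (by norm_num)]
  norm_num [V_8_20, V_9_28]

lemma V_7_28 : V 7 28 = 18 := by
  rw [V_rec 7 28 (by norm_num) (by norm_num)]
  norm_num [V_7_21, V_8_28]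

lemma V_6_28 : V 6 28 = 29 := by
  rw [V_rec 6 28 (by norm_num) (by norm_num)]
  norm_num [V_6_22, V_7_28]

lemma V_5_28 : V 5 28 = 50 := by
  rw [V_rec 5 28 (by norm_num) (by norm_num)]
  norm_num [V_5_23, V_6_28]

lemma V_4_28 : V 4 28 = 100 := by
  rw [V_rec 4 28 (by norm_num) (by norm_num)]
  norm_num [V_4_24, V_5_28]

lemma V_3_28 : V 3 28 = 230 := by
  rw [V_rec 3 28 (by norm_num) (by norm_num)]
  norm_num [V_3_25, V_4_28]

lemma V_2_28 : V 2 28 = 708 := by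
  rw [V_rec 2 28 (by norm_num) (by norm_num)]
  norm_num [V_2_26, V_3_28]

lemma V_24_29 : V 24 29 = 1 := V_one_eq 24 29 (by norm_num) (by norm_num)

lemma V_23_29 : V 23 29 = 1 := V_one_eq 23 29 (by norm_num) (by norm_num)

lemma V_22_29 : V 22 29 = 1 := V_one_eq 22 29 (by norm_num) (by norm_num)

lemma V_21_29 : V 21 29 = 1 := V_one_eq 21 29 (by norm_num) (by norm_num)

lemma V_20_29 : V 20 29 = 1 := V_one_eq 20 29 (by norm_num) (by norm_num)

lemma V_19_29 : V 19 29 = 1 := V_one_eq 19 29 (by norm_num) (by norm_num)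

lemma V_18_29 : V 18 29 = 1 := V_one_eq 18 29 (by norm_num) (by norm_num)

lemma V_17_29 : V 17 29 = 1 := V_one_eq 17 29 (by norm_num) (by norm_num)

lemma V_16_29 : V 16 29 = 1 := V_one_eq 16 29 (by norm_num) (by norm_num)

lemma V_15_29 : V 15 29 = 1 := V_one_eq 15 29 (by norm_num) (by norm_num)

lemma V_14_29 : V 14 29 = 2 := by
  rw [V_rec 14 29 (by norm_num) (by norm_num)]
  norm_num [V_14_15, V_15_29]

lemma V_13_29 : V 13 29 = 3 := by
  rw [V_rec 13 29 (by norm_num) (by norm_num)]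
  norm_num [V_13_16, V_14_29]

lemma V_12_29 : V 12 29 = 4 := by
  rw [V_rec 12 29 (by norm_num) (by norm_num)]
  norm_num [V_12_17, V_13_29]

lemma V_11_29 : V 11 29 = 5 := by
  rw [V_rec 11 29 (by norm_num) (by norm_num)]
  norm_num [V_11_18, V_12_29]

lemma V_10_29 : V 10 29 = 6 := by
  rw [V_rec 10 29 (by norm_num) (by norm_num)]
  norm_num [V_10_19, V_11_29]

lemma V_9_29 : V 9 29 = 9 := by
  rw [V_rec 9 29 (by norm_num) (by norm_num)]
  norm_num [V_9_20, V_10_29]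

lemma V_8_29 : V 8 29 = 13 := by
  rw [V_rec 8 29 (by norm_num) (by norm_num)]
  norm_num [V_8_21, V_9_29]

lemma V_7_29 : V 7 29 = 20 := by
  rw [V_rec 7 29 (by norm_num) (by norm_num)]
  norm_num [V_7_22, V_8_29]

lemma V_6_29 : V 6 29 = 32 := by
  rw [V_rec 6 29 (by norm_num) (by norm_num)]
  norm_num [V_6_23, V_7_29]

lemma V_5_29 : V 5 29 = 58 := by
  rw [V_rec 5 29 (by norm_num) (by norm_num)]
  norm_num [V_5_24, V_6_29]

lemma V_4_29 : V 4 29 = 115 := by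
  rw [V_rec 4 29 (by norm_num) (by norm_num)]
  norm_num [V_4_25, V_5_29]

lemma V_3_29 : V 3 29 = 273 := by
  rw [V_rec 3 29 (by norm_num) (by norm_num)]
  norm_num [V_3_26, V_4_29]

lemma V_2_29 : V 2 29 = 847 := by
  rw [V_rec 2 29 (by norm_num) (by norm_num)]
  norm_num [V_2_27, V_3_29]

lemma V_23_30 : V 23 30 = 1 := V_one_eq 23 30 (by norm_num) (by norm_num)

lemma V_22_30 : V 22 30 = 1 := V_one_eq 22 30 (by norm_num) (by norm_num)

lemma V_21_30 : V 21 30 = 1 := V_one_eq 21 30 (by norm_num) (by norm_num)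

lemma V_20_30 : V 20 30 = 1 := V_one_eq 20 30 (by norm_num) (by norm_num)

lemma V_19_30 : V 19 30 = 1 := V_one_eq 19 30 (by norm_num) (by norm_num)

lemma V_18_30 : V 18 30 = 1 := V_one_eq 18 30 (by norm_num) (by norm_num)

lemma V_17_30 : V 17 30 = 1 := V_one_eq 17 30 (by norm_num) (by norm_num)

lemma V_16_30 : V 16 30 = 1 := V_one_eq 16 30 (by norm_num) (by norm_num)

lemma V_15_30 : V 15 30 = 2 := by
  rw [V_rec 15 30 (by norm_num) (by norm_num)]
  norm_num [V_15_15, V_16_30]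

lemma V_14_30 : V 14 30 = 3 := by
  rw [V_rec 14 30 (by norm_num) (by norm_num)]
  norm_num [V_14_16, V_15_30]

lemma V_13_30 : V 13 30 = 4 := by
  rw [V_rec 13 30 (by norm_num) (by norm_num)]
  norm_num [V_13_17, V_14_30]

lemma V_12_30 : V 12 30 = 5 := by
  rw [V_rec 12 30 (by norm_num) (by norm_num)]
  norm_num [V_12_18, V_13_30]

lemma V_11_30 : V 11 30 = 6 := by
  rw [V_rec 11 30 (by norm_num) (by norm_num)]
  norm_num [V_11_19, V_12_30]

lemma V_10_30 : V 10 30 = 8 := by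
  rw [V_rec 10 30 (by norm_num) (by norm_num)]
  norm_num [V_10_20, V_11_30]

lemma V_9_30 : V 9 30 = 11 := by
  rw [V_rec 9 30 (by norm_num) (by norm_num)]
  norm_num [V_9_21, V_10_30]

lemma V_8_30 : V 8 30 = 16 := by
  rw [V_rec 8 30 (by norm_num) (by norm_num)]
  norm_num [V_8_22, V_9_30]

lemma V_7_30 : V 7 30 = 24 := by
  rw [V_rec 7 30 (by norm_num) (by norm_num)]
  norm_num [V_7_23, V_8_30]

lemma V_6_30 : V 6 30 = 40 := by
  rw [V_rec 6 30 (by norm_num) (by norm_num)]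
  norm_num [V_6_24, V_7_30]

lemma V_5_30 : V 5 30 = 70 := by
  rw [V_rec 5 30 (by norm_num) (by norm_num)]
  norm_num [V_5_25, V_6_30]

lemma V_4_30 : V 4 30 = 140 := by
  rw [V_rec 4 30 (by norm_num) (by norm_num)]
  norm_num [V_4_26, V_5_30]

lemma V_3_30 : V 3 30 = 331 := by
  rw [V_rec 3 30 (by norm_num) (by norm_num)]
  norm_num [V_3_27, V_4_30]

lemma V_2_30 : V 2 30 = 1039 := by
  rw [V_rec 2 30 (by norm_num) (by norm_num)]
  norm_num [V_2_28, V_3_30]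

lemma V_22_31 : V 22 31 = 1 := V_one_eq 22 31 (by norm_num) (by norm_num)

lemma V_21_31 : V 21 31 = 1 := V_one_eq 21 31 (by norm_num) (by norm_num)

lemma V_20_31 : V 20 31 = 1 := V_one_eq 20 31 (by norm_num) (by norm_num)

lemma V_19_31 : V 19 31 = 1 := V_one_eq 19 31 (by norm_num) (by norm_num)

lemma V_18_31 : V 18 31 = 1 := V_one_eq 18 31 (by norm_num) (by norm_num)

lemma V_17_31 : V 17 31 = 1 := V_one_eq 17 31 (by norm_num) (by norm_num)

lemma V_16_31 : V 16 31 = 1 := V_one_eq 16 31 (by norm_num) (by norm_num)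

lemma V_15_31 : V 15 31 = 2 := by
  rw [V_rec 15 31 (by norm_num) (by norm_num)]
  norm_num [V_15_16, V_16_31]

lemma V_14_31 : V 14 31 = 3 := by
  rw [V_rec 14 31 (by norm_num) (by norm_num)]
  norm_num [V_14_17, V_15_31]

lemma V_13_31 : V 13 31 = 4 := by
  rw [V_rec 13 31 (by norm_num) (by norm_num)]
  norm_num [V_13_18, V_14_31]

lemma V_12_31 : V 12 31 = 5 := by
  rw [V_rec 12 31 (by norm_num) (by norm_num)]
  norm_num [V_12_19, V_13_31]

lemma V_11_31 : V 11 31 = 6 := by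
  rw [V_rec 11 31 (by norm_num) (by norm_num)]
  norm_num [V_11_20, V_12_31]

lemma V_10_31 : V 10 31 = 8 := by
  rw [V_rec 10 31 (by norm_num) (by norm_num)]
  norm_num [V_10_21, V_11_31]

lemma V_9_31 : V 9 31 = 12 := by
  rw [V_rec 9 31 (by norm_num) (by norm_num)]
  norm_num [V_9_22, V_10_31]

lemma V_8_31 : V 8 31 = 17 := by
  rw [V_rec 8 31 (by norm_num) (by norm_num)]
  norm_num [V_8_23, V_9_31]

lemma V_7_31 : V 7 31 = 27 := by
  rw [V_rec 7 31 (by norm_num) (by norm_num)]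
  norm_num [V_7_24, V_8_31]

lemma V_6_31 : V 6 31 = 44 := by
  rw [V_rec 6 31 (by norm_num) (by norm_num)]
  norm_num [V_6_25, V_7_31]

lemma V_5_31 : V 5 31 = 80 := by
  rw [V_rec 5 31 (by norm_num) (by norm_num)]
  norm_num [V_5_26, V_6_31]

lemma V_4_31 : V 4 31 = 161 := by
  rw [V_rec 4 31 (by norm_num) (by norm_num)]
  norm_num [V_4_27, V_5_31]

lemma V_3_31 : V 3 31 = 391 := by
  rw [V_rec 3 31 (by norm_num) (by norm_num)]
  norm_num [V_3_28, V_4_31]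

lemma V_21_32 : V 21 32 = 1 := V_one_eq 21 32 (by norm_num) (by norm_num)

lemma V_20_32 : V 20 32 = 1 := V_one_eq 20 32 (by norm_num) (by norm_num)

lemma V_19_32 : V 19 32 = 1 := V_one_eq 19 32 (by norm_num) (by norm_num)

lemma V_18_32 : V 18 32 = 1 := V_one_eq 18 32 (by norm_num) (by norm_num)

lemma V_17_32 : V 17 32 = 1 := V_one_eq 17 32 (by norm_num) (by norm_num)

lemma V_16_32 : V 16 32 = 2 := by
  rw [V_rec 16 32 (by norm_num) (by norm_num)]
  norm_num [V_16_16, V_17_32]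

lemma V_15_32 : V 15 32 = 3 := by
  rw [V_rec 15 32 (by norm_num) (by norm_num)]
  norm_num [V_15_17, V_16_32]

lemma V_14_32 : V 14 32 = 4 := by
  rw [V_rec 14 32 (by norm_num) (by norm_num)]
  norm_num [V_14_18, V_15_32]

lemma V_13_32 : V 13 32 = 5 := by
  rw [V_rec 13 32 (by norm_num) (by norm_num)]
  norm_num [V_13_19, V_14_32]

lemma V_12_32 : V 12 32 = 6 := by
  rw [V_rec 12 32 (by norm_num) (by norm_num)]
  norm_num [V_12_20, V_13_32]

lemma V_11_32 : V 11 32 = 7 := by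
  rw [V_rec 11 32 (by norm_num) (by norm_num)]
  norm_num [V_11_21, V_12_32]

lemma V_10_32 : V 10 32 = 10 := by
  rw [V_rec 10 32 (by norm_num) (by norm_num)]
  norm_num [V_10_22, V_11_32]

lemma V_9_32 : V 9 32 = 14 := by
  rw [V_rec 9 32 (by norm_num) (by norm_num)]
  norm_num [V_9_23, V_10_32]

lemma V_8_32 : V 8 32 = 21 := by
  rw [V_rec 8 32 (by norm_num) (by norm_num)]
  norm_num [V_8_24, V_9_32]

lemma V_7_32 : V 7 32 = 32 := by
  rw [V_rec 7 32 (by norm_num) (by norm_num)]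
  norm_num [V_7_25, V_8_32]

lemma V_6_32 : V 6 32 = 53 := by
  rw [V_rec 6 32 (by norm_num) (by norm_num)]
  norm_num [V_6_26, V_7_32]

lemma V_5_32 : V 5 32 = 95 := by
  rw [V_rec 5 32 (by norm_num) (by norm_num)]
  norm_num [V_5_27, V_6_32]

lemma V_4_32 : V 4 32 = 195 := by
  rw [V_rec 4 32 (by norm_num) (by norm_num)]
  norm_num [V_4_28, V_5_32]

lemma V_3_32 : V 3 32 = 468 := by
  rw [V_rec 3 32 (by norm_num) (by norm_num)]
  norm_num [V_3_29, V_4_32]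

lemma V_20_33 : V 20 33 = 1 := V_one_eq 20 33 (by norm_num) (by norm_num)

lemma V_19_33 : V 19 33 = 1 := V_one_eq 19 33 (by norm_num) (by norm_num)

lemma V_18_33 : V 18 33 = 1 := V_one_eq 18 33 (by norm_num) (by norm_num)

lemma V_17_33 : V 17 33 = 1 := V_one_eq 17 33 (by norm_num) (by norm_num)

lemma V_16_33 : V 16 33 = 2 := by
  rw [V_rec 16 33 (by norm_num) (by norm_num)]
  norm_num [V_16_17, V_17_33]

lemma V_15_33 : V 15 33 = 3 := by
  rw [V_rec 15 33 (by norm_num) (by norm_num)]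
  norm_num [V_15_18, V_16_33]

lemma V_14_33 : V 14 33 = 4 := by
  rw [V_rec 14 33 (by norm_num) (by norm_num)]
  norm_num [V_14_19, V_15_33]

lemma V_13_33 : V 13 33 = 5 := by
  rw [V_rec 13 33 (by norm_num) (by norm_num)]
  norm_num [V_13_20, V_14_33]

lemma V_12_33 : V 12 33 = 6 := by
  rw [V_rec 12 33 (by norm_num) (by norm_num)]
  norm_num [V_12_21, V_13_33]

lemma V_11_33 : V 11 33 = 8 := by
  rw [V_rec 11 33 (by norm_num) (by norm_num)]
  norm_num [V_11_22, V_12_33]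

lemma V_10_33 : V 10 33 = 11 := by
  rw [V_rec 10 33 (by norm_num) (by norm_num)]
  norm_num [V_10_23, V_11_33]

lemma V_9_33 : V 9 33 = 16 := by
  rw [V_rec 9 33 (by norm_num) (by norm_num)]
  norm_num [V_9_24, V_10_33]

lemma V_8_33 : V 8 33 = 23 := by
  rw [V_rec 8 33 (by norm_num) (by norm_num)]
  norm_num [V_8_25, V_9_33]

lemma V_7_33 : V 7 33 = 36 := by
  rw [V_rec 7 33 (by norm_num) (by norm_num)]
  norm_num [V_7_26, V_8_33]

lemma V_6_33 : V 6 33 = 60 := by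
  rw [V_rec 6 33 (by norm_num) (by norm_num)]
  norm_num [V_6_27, V_7_33]

lemma V_5_33 : V 5 33 = 110 := by
  rw [V_rec 5 33 (by norm_num) (by norm_num)]
  norm_num [V_5_28, V_6_33]

lemma V_4_33 : V 4 33 = 225 := by
  rw [V_rec 4 33 (by norm_num) (by norm_num)]
  norm_num [V_4_29, V_5_33]

lemma V_3_33 : V 3 33 = 556 := by
  rw [V_rec 3 33 (by norm_num) (by norm_num)]
  norm_num [V_3_30, V_4_33]

lemma V_19_34 : V 19 34 = 1 := V_one_eq 19 34 (by norm_num) (by norm_num)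

lemma V_18_34 : V 18 34 = 1 := V_one_eq 18 34 (by norm_num) (by norm_num)

lemma V_17_34 : V 17 34 = 2 := by
  rw [V_rec 17 34 (by norm_num) (by norm_num)]
  norm_num [V_17_17, V_18_34]

lemma V_16_34 : V 16 34 = 3 := by
  rw [V_rec 16 34 (by norm_num) (by norm_num)]
  norm_num [V_16_18, V_17_34]

lemma V_15_34 : V 15 34 = 4 := by
  rw [V_rec 15 34 (by norm_num) (by norm_num)]
  norm_num [V_15_19, V_16_34]

lemma V_14_34 : V 14 34 = 5 := by
  rw [V_rec 14 34 (by norm_num) (by norm_num)]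
  norm_num [V_14_20, V_15_34]

lemma V_13_34 : V 13 34 = 6 := by
  rw [V_rec 13 34 (by norm_num) (by norm_num)]
  norm_num [V_13_21, V_14_34]

lemma V_12_34 : V 12 34 = 7 := by
  rw [V_rec 12 34 (by norm_num) (by norm_num)]
  norm_num [V_12_22, V_13_34]

lemma V_11_34 : V 11 34 = 9 := by
  rw [V_rec 11 34 (by norm_num) (by norm_num)]
  norm_num [V_11_23, V_12_34]

lemma V_10_34 : V 10 34 = 13 := by
  rw [V_rec 10 34 (by norm_num) (by norm_num)]
  norm_num [V_10_24, V_11_34]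

lemma V_9_34 : V 9 34 = 18 := by
  rw [V_rec 9 34 (by norm_num) (by norm_num)]
  norm_num [V_9_25, V_10_34]

lemma V_8_34 : V 8 34 = 27 := by
  rw [V_rec 8 34 (by norm_num) (by norm_num)]
  norm_num [V_8_26, V_9_34]

lemma V_7_34 : V 7 34 = 42 := by
  rw [V_rec 7 34 (by norm_num) (by norm_num)]
  norm_num [V_7_27, V_8_34]

lemma V_6_34 : V 6 34 = 71 := by
  rw [V_rec 6 34 (by norm_num) (by norm_num)]
  norm_num [V_6_28, V_7_34]

lemma V_5_34 : V 5 34 = 129 := by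
  rw [V_rec 5 34 (by norm_num) (by norm_num)]
  norm_num [V_5_29, V_6_34]

lemma V_4_34 : V 4 34 = 269 := by
  rw [V_rec 4 34 (by norm_num) (by norm_num)]
  norm_num [V_4_30, V_5_34]

lemma V_3_34 : V 3 34 = 660 := by
  rw [V_rec 3 34 (by norm_num) (by norm_num)]
  norm_num [V_3_31, V_4_34]

lemma V_18_35 : V 18 35 = 1 := V_one_eq 18 35 (by norm_num) (by norm_num)

lemma V_17_35 : V 17 35 = 2 := by
  rw [V_rec 17 35 (by norm_num) (by norm_num)]
  norm_num [V_17_18, V_18_35]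

lemma V_16_35 : V 16 35 = 3 := by
  rw [V_rec 16 35 (by norm_num) (by norm_num)]
  norm_num [V_16_19, V_17_35]

lemma V_15_35 : V 15 35 = 4 := by
  rw [V_rec 15 35 (by norm_num) (by norm_num)]
  norm_num [V_15_20, V_16_35]

lemma V_14_35 : V 14 35 = 5 := by
  rw [V_rec 14 35 (by norm_num) (by norm_num)]
  norm_num [V_14_21, V_15_35]

lemma V_13_35 : V 13 35 = 6 := by
  rw [V_rec 13 35 (by norm_num) (by norm_num)]
  norm_num [V_13_22, V_14_35]

lemma V_12_35 : V 12 35 = 7 := by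
  rw [V_rec 12 35 (by norm_num) (by norm_num)]
  norm_num [V_12_23, V_13_35]

lemma V_11_35 : V 11 35 = 10 := by
  rw [V_rec 11 35 (by norm_num) (by norm_num)]
  norm_num [V_11_24, V_12_35]

lemma V_10_35 : V 10 35 = 14 := by
  rw [V_rec 10 35 (by norm_num) (by norm_num)]
  norm_num [V_10_25, V_11_35]

lemma V_9_35 : V 9 35 = 20 := by
  rw [V_rec 9 35 (by norm_num) (by norm_num)]
  norm_num [V_9_26, V_10_35]

lemma V_8_35 : V 8 35 = 30 := by
  rw [V_rec 8 35 (by norm_num) (by norm_num)]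
  norm_num [V_8_27, V_9_35]

lemma V_7_35 : V 7 35 = 48 := by
  rw [V_rec 7 35 (by norm_num) (by norm_num)]
  norm_num [V_7_28, V_8_35]

lemma V_6_35 : V 6 35 = 80 := by
  rw [V_rec 6 35 (by norm_num) (by norm_num)]
  norm_num [V_6_29, V_7_35]

lemma V_5_35 : V 5 35 = 150 := by
  rw [V_rec 5 35 (by norm_num) (by norm_num)]
  norm_num [V_5_30, V_6_35]

lemma V_4_35 : V 4 35 = 311 := by
  rw [V_rec 4 35 (by norm_num) (by norm_num)]
  norm_num [V_4_31, V_5_35]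

lemma V_19_36 : V 19 36 = 1 := V_one_eq 19 36 (by norm_num) (by norm_num)

lemma V_18_36 : V 18 36 = 2 := by
  rw [V_rec 18 36 (by norm_num) (by norm_num)]
  norm_num [V_18_18, V_19_36]

lemma V_17_36 : V 17 36 = 3 := by
  rw [V_rec 17 36 (by norm_num) (by norm_num)]
  norm_num [V_17_19, V_18_36]

lemma V_16_36 : V 16 36 = 4 := by
  rw [V_rec 16 36 (by norm_num) (by norm_num)]
  norm_num [V_16_20, V_17_36]

lemma V_15_36 : V 15 36 = 5 := by
  rw [V_rec 15 36 (by norm_num) (by norm_num)]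
  norm_num [V_15_21, V_16_36]

lemma V_14_36 : V 14 36 = 6 := by
  rw [V_rec 14 36 (by norm_num) (by norm_num)]
  norm_num [V_14_22, V_15_36]

lemma V_13_36 : V 13 36 = 7 := by
  rw [V_rec 13 36 (by norm_num) (by norm_num)]
  norm_num [V_13_23, V_14_36]

lemma V_12_36 : V 12 36 = 9 := by
  rw [V_rec 12 36 (by norm_num) (by norm_num)]
  norm_num [V_12_24, V_13_36]

lemma V_11_36 : V 11 36 = 12 := by
  rw [V_rec 11 36 (by norm_num) (by norm_num)]
  norm_num [V_11_25, V_12_36]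

lemma V_10_36 : V 10 36 = 17 := by
  rw [V_rec 10 36 (by norm_num) (by norm_num)]
  norm_num [V_10_26, V_11_36]

lemma V_9_36 : V 9 36 = 24 := by
  rw [V_rec 9 36 (by norm_num) (by norm_num)]
  norm_num [V_9_27, V_10_36]

lemma V_8_36 : V 8 36 = 36 := by
  rw [V_rec 8 36 (by norm_num) (by norm_num)]
  norm_num [V_8_28, V_9_36]

lemma V_7_36 : V 7 36 = 56 := by
  rw [V_rec 7 36 (by norm_num) (by norm_num)]
  norm_num [V_7_29, V_8_36]

lemma V_6_36 : V 6 36 = 96 := by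
  rw [V_rec 6 36 (by norm_num) (by norm_num)]
  norm_num [V_6_30, V_7_36]

lemma V_5_36 : V 5 36 = 176 := by
  rw [V_rec 5 36 (by norm_num) (by norm_num)]
  norm_num [V_5_31, V_6_36]

lemma V_4_36 : V 4 36 = 371 := by
  rw [V_rec 4 36 (by norm_num) (by norm_num)]
  norm_num [V_4_32, V_5_36]

lemma V_19_37 : V 19 37 = 1 := V_one_eq 19 37 (by norm_num) (by norm_num)

lemma V_18_37 : V 18 37 = 2 := by
  rw [V_rec 18 37 (by norm_num) (by norm_num)]
  norm_num [V_18_19, V_19_37]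

lemma V_17_37 : V 17 37 = 3 := by
  rw [V_rec 17 37 (by norm_num) (by norm_num)]
  norm_num [V_17_20, V_18_37]

lemma V_16_37 : V 16 37 = 4 := by
  rw [V_rec 16 37 (by norm_num) (by norm_num)]
  norm_num [V_16_21, V_17_37]

lemma V_15_37 : V 15 37 = 5 := by
  rw [V_rec 15 37 (by norm_num) (by norm_num)]
  norm_num [V_15_22, V_16_37]

lemma V_14_37 : V 14 37 = 6 := by
  rw [V_rec 14 37 (by norm_num) (by norm_num)]
  norm_num [V_14_23, V_15_37]

lemma V_13_37 : V 13 37 = 7 := by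
  rw [V_rec 13 37 (by norm_num) (by norm_num)]
  norm_num [V_13_24, V_14_37]

lemma V_12_37 : V 12 37 = 9 := by
  rw [V_rec 12 37 (by norm_num) (by norm_num)]
  norm_num [V_12_25, V_13_37]

lemma V_11_37 : V 11 37 = 13 := by
  rw [V_rec 11 37 (by norm_num) (by norm_num)]
  norm_num [V_11_26, V_12_37]

lemma V_10_37 : V 10 37 = 18 := by
  rw [V_rec 10 37 (by norm_num) (by norm_num)]
  norm_num [V_10_27, V_11_37]

lemma V_9_37 : V 9 37 = 26 := by
  rw [V_rec 9 37 (by norm_num) (by norm_num)]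
  norm_num [V_9_28, V_10_37]

lemma V_8_37 : V 8 37 = 39 := by
  rw [V_rec 8 37 (by norm_num) (by norm_num)]
  norm_num [V_8_29, V_9_37]

lemma V_7_37 : V 7 37 = 63 := by
  rw [V_rec 7 37 (by norm_num) (by norm_num)]
  norm_num [V_7_30, V_8_37]

lemma V_6_37 : V 6 37 = 107 := by
  rw [V_rec 6 37 (by norm_num) (by norm_num)]
  norm_num [V_6_31, V_7_37]

lemma V_5_37 : V 5 37 = 202 := by
  rw [V_rec 5 37 (by norm_num) (by norm_num)]
  norm_num [V_5_32, V_6_37]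

lemma V_4_37 : V 4 37 = 427 := by
  rw [V_rec 4 37 (by norm_num) (by norm_num)]
  norm_num [V_4_33, V_5_37]

lemma V_20_38 : V 20 38 = 1 := V_one_eq 20 38 (by norm_num) (by norm_num)

lemma V_19_38 : V 19 38 = 2 := by
  rw [V_rec 19 38 (by norm_num) (by norm_num)]
  norm_num [V_19_19, V_20_38]

lemma V_18_38 : V 18 38 = 3 := by
  rw [V_rec 18 38 (by norm_num) (by norm_num)]
  norm_num [V_18_20, V_19_38]

lemma V_17_38 : V 17 38 = 4 := by
  rw [V_rec 17 38 (by norm_num) (by norm_num)]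
  norm_num [V_17_21, V_18_38]

lemma V_16_38 : V 16 38 = 5 := by
  rw [V_rec 16 38 (by norm_num) (by norm_num)]
  norm_num [V_16_22, V_17_38]

lemma V_15_38 : V 15 38 = 6 := by
  rw [V_rec 15 38 (by norm_num) (by norm_num)]
  norm_num [V_15_23, V_16_38]

lemma V_14_38 : V 14 38 = 7 := by
  rw [V_rec 14 38 (by norm_num) (by norm_num)]
  norm_num [V_14_24, V_15_38]

lemma V_13_38 : V 13 38 = 8 := by
  rw [V_rec 13 38 (by norm_num) (by norm_num)]
  norm_num [V_13_25, V_14_38]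

lemma V_12_38 : V 12 38 = 11 := by
  rw [V_rec 12 38 (by norm_num) (by norm_num)]
  norm_num [V_12_26, V_13_38]

lemma V_11_38 : V 11 38 = 15 := by
  rw [V_rec 11 38 (by norm_num) (by norm_num)]
  norm_num [V_11_27, V_12_38]

lemma V_10_38 : V 10 38 = 21 := by
  rw [V_rec 10 38 (by norm_num) (by norm_num)]
  norm_num [V_10_28, V_11_38]

lemma V_9_38 : V 9 38 = 30 := by
  rw [V_rec 9 38 (by norm_num) (by norm_num)]
  norm_num [V_9_29, V_10_38]

lemma V_8_38 : V 8 38 = 46 := by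
  rw [V_rec 8 38 (by norm_num) (by norm_num)]
  norm_num [V_8_30, V_9_38]

lemma V_7_38 : V 7 38 = 73 := by
  rw [V_rec 7 38 (by norm_num) (by norm_num)]
  norm_num [V_7_31, V_8_38]

lemma V_6_38 : V 6 38 = 126 := by
  rw [V_rec 6 38 (by norm_num) (by norm_num)]
  norm_num [V_6_32, V_7_38]

lemma V_5_38 : V 5 38 = 236 := by
  rw [V_rec 5 38 (by norm_num) (by norm_num)]
  norm_num [V_5_33, V_6_38]

lemma V_4_38 : V 4 38 = 505 := by
  rw [V_rec 4 38 (by norm_num) (by norm_num)]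
  norm_num [V_4_34, V_5_38]

lemma V_20_39 : V 20 39 = 1 := V_one_eq 20 39 (by norm_num) (by norm_num)

lemma V_19_39 : V 19 39 = 2 := by
  rw [V_rec 19 39 (by norm_num) (by norm_num)]
  norm_num [V_19_20, V_20_39]

lemma V_18_39 : V 18 39 = 3 := by
  rw [V_rec 18 39 (by norm_num) (by norm_num)]
  norm_num [V_18_21, V_19_39]

lemma V_17_39 : V 17 39 = 4 := by
  rw [V_rec 17 39 (by norm_num) (by norm_num)]
  norm_num [V_17_22, V_18_39]

lemma V_16_39 : V 16 39 = 5 := by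
  rw [V_rec 16 39 (by norm_num) (by norm_num)]
  norm_num [V_16_23, V_17_39]

lemma V_15_39 : V 15 39 = 6 := by
  rw [V_rec 15 39 (by norm_num) (by norm_num)]
  norm_num [V_15_24, V_16_39]

lemma V_14_39 : V 14 39 = 7 := by
  rw [V_rec 14 39 (by norm_num) (by norm_num)]
  norm_num [V_14_25, V_15_39]

lemma V_13_39 : V 13 39 = 9 := by
  rw [V_rec 13 39 (by norm_num) (by norm_num)]
  norm_num [V_13_26, V_14_39]

lemma V_12_39 : V 12 39 = 12 := by
  rw [V_rec 12 39 (by norm_num) (by norm_num)]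
  norm_num [V_12_27, V_13_39]

lemma V_11_39 : V 11 39 = 17 := by
  rw [V_rec 11 39 (by norm_num) (by norm_num)]
  norm_num [V_11_28, V_12_39]

lemma V_10_39 : V 10 39 = 23 := by
  rw [V_rec 10 39 (by norm_num) (by norm_num)]
  norm_num [V_10_29, V_11_39]

lemma V_9_39 : V 9 39 = 34 := by
  rw [V_rec 9 39 (by norm_num) (by norm_num)]
  norm_num [V_9_30, V_10_39]

lemma V_8_39 : V 8 39 = 51 := by
  rw [V_rec 8 39 (by norm_num) (by norm_num)]
  norm_num [V_8_31, V_9_39]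

lemma V_7_39 : V 7 39 = 83 := by
  rw [V_rec 7 39 (by norm_num) (by norm_num)]
  norm_num [V_7_32, V_8_39]

lemma V_6_39 : V 6 39 = 143 := by
  rw [V_rec 6 39 (by norm_num) (by norm_num)]
  norm_num [V_6_33, V_7_39]

lemma V_5_39 : V 5 39 = 272 := by
  rw [V_rec 5 39 (by norm_num) (by norm_num)]
  norm_num [V_5_34, V_6_39]

lemma V_4_39 : V 4 39 = 583 := by
  rw [V_rec 4 39 (by norm_num) (by norm_num)]
  norm_num [V_4_35, V_5_39]

lemma V_21_40 : V 21 40 = 1 := V_one_eq 21 40 (by norm_num) (by norm_num)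

lemma V_20_40 : V 20 40 = 2 := by
  rw [V_rec 20 40 (by norm_num) (by norm_num)]
  norm_num [V_20_20, V_21_40]

lemma V_19_40 : V 19 40 = 3 := by
  rw [V_rec 19 40 (by norm_num) (by norm_num)]
  norm_num [V_19_21, V_20_40]

lemma V_18_40 : V 18 40 = 4 := by
  rw [V_rec 18 40 (by norm_num) (by norm_num)]
  norm_num [V_18_22, V_19_40]

lemma V_17_40 : V 17 40 = 5 := by
  rw [V_rec 17 40 (by norm_num) (by norm_num)]
  norm_num [V_17_23, V_18_40]

lemma V_16_40 : V 16 40 = 6 := by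
  rw [V_rec 16 40 (by norm_num) (by norm_num)]
  norm_num [V_16_24, V_17_40]

lemma V_15_40 : V 15 40 = 7 := by
  rw [V_rec 15 40 (by norm_num) (by norm_num)]
  norm_num [V_15_25, V_16_40]

lemma V_14_40 : V 14 40 = 8 := by
  rw [V_rec 14 40 (by norm_num) (by norm_num)]
  norm_num [V_14_26, V_15_40]

lemma V_13_40 : V 13 40 = 10 := by
  rw [V_rec 13 40 (by norm_num) (by norm_num)]
  norm_num [V_13_27, V_14_40]

lemma V_12_40 : V 12 40 = 14 := by
  rw [V_rec 12 40 (by norm_num) (by norm_num)]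
  norm_num [V_12_28, V_13_40]

lemma V_11_40 : V 11 40 = 19 := by
  rw [V_rec 11 40 (by norm_num) (by norm_num)]
  norm_num [V_11_29, V_12_40]

lemma V_10_40 : V 10 40 = 27 := by
  rw [V_rec 10 40 (by norm_num) (by norm_num)]
  norm_num [V_10_30, V_11_40]

lemma V_9_40 : V 9 40 = 39 := by
  rw [V_rec 9 40 (by norm_num) (by norm_num)]
  norm_num [V_9_31, V_10_40]

lemma V_8_40 : V 8 40 = 60 := by
  rw [V_rec 8 40 (by norm_num) (by norm_num)]
  norm_num [V_8_32, V_9_40]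

lemma V_7_40 : V 7 40 = 96 := by
  rw [V_rec 7 40 (by norm_num) (by norm_num)]
  norm_num [V_7_33, V_8_40]

lemma V_6_40 : V 6 40 = 167 := by
  rw [V_rec 6 40 (by norm_num) (by norm_num)]
  norm_num [V_6_34, V_7_40]

lemma V_5_40 : V 5 40 = 317 := by
  rw [V_rec 5 40 (by norm_num) (by norm_num)]
  norm_num [V_5_35, V_6_40]

lemma V_21_41 : V 21 41 = 1 := V_one_eq 21 41 (by norm_num) (by norm_num)

lemma V_20_41 : V 20 41 = 2 := by
  rw [V_rec 20 41 (by norm_num) (by norm_num)]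
  norm_num [V_20_21, V_21_41]

lemma V_19_41 : V 19 41 = 3 := by
  rw [V_rec 19 41 (by norm_num) (by norm_num)]
  norm_num [V_19_22, V_20_41]

lemma V_18_41 : V 18 41 = 4 := by
  rw [V_rec 18 41 (by norm_num) (by norm_num)]
  norm_num [V_18_23, V_19_41]

lemma V_17_41 : V 17 41 = 5 := by
  rw [V_rec 17 41 (by norm_num) (by norm_num)]
  norm_num [V_17_24, V_18_41]

lemma V_16_41 : V 16 41 = 6 := by
  rw [V_rec 16 41 (by norm_num) (by norm_num)]
  norm_num [V_16_25, V_17_41]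

lemma V_15_41 : V 15 41 = 7 := by
  rw [V_rec 15 41 (by norm_num) (by norm_num)]
  norm_num [V_15_26, V_16_41]

lemma V_14_41 : V 14 41 = 8 := by
  rw [V_rec 14 41 (by norm_num) (by norm_num)]
  norm_num [V_14_27, V_15_41]

lemma V_13_41 : V 13 41 = 11 := by
  rw [V_rec 13 41 (by norm_num) (by norm_num)]
  norm_num [V_13_28, V_14_41]

lemma V_12_41 : V 12 41 = 15 := by
  rw [V_rec 12 41 (by norm_num) (by norm_num)]
  norm_num [V_12_29, V_13_41]

lemma V_11_41 : V 11 41 = 21 := by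
  rw [V_rec 11 41 (by norm_num) (by norm_num)]
  norm_num [V_11_30, V_12_41]

lemma V_10_41 : V 10 41 = 29 := by
  rw [V_rec 10 41 (by norm_num) (by norm_num)]
  norm_num [V_10_31, V_11_41]

lemma V_9_41 : V 9 41 = 43 := by
  rw [V_rec 9 41 (by norm_num) (by norm_num)]
  norm_num [V_9_32, V_10_41]

lemma V_8_41 : V 8 41 = 66 := by
  rw [V_rec 8 41 (by norm_num) (by norm_num)]
  norm_num [V_8_33, V_9_41]

lemma V_7_41 : V 7 41 = 108 := by
  rw [V_rec 7 41 (by norm_num) (by norm_num)]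
  norm_num [V_7_34, V_8_41]

lemma V_6_41 : V 6 41 = 188 := by
  rw [V_rec 6 41 (by norm_num) (by norm_num)]
  norm_num [V_6_35, V_7_41]

lemma V_5_41 : V 5 41 = 364 := by
  rw [V_rec 5 41 (by norm_num) (by norm_num)]
  norm_num [V_5_36, V_6_41]

lemma V_22_42 : V 22 42 = 1 := V_one_eq 22 42 (by norm_num) (by norm_num)

lemma V_21_42 : V 21 42 = 2 := by
  rw [V_rec 21 42 (by norm_num) (by norm_num)]
  norm_num [V_21_21, V_22_42]

lemma V_20_42 : V 20 42 = 3 := by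
  rw [V_rec 20 42 (by norm_num) (by norm_num)]
  norm_num [V_20_22, V_21_42]

lemma V_19_42 : V 19 42 = 4 := by
  rw [V_rec 19 42 (by norm_num) (by norm_num)]
  norm_num [V_19_23, V_20_42]

lemma V_18_42 : V 18 42 = 5 := by
  rw [V_rec 18 42 (by norm_num) (by norm_num)]
  norm_num [V_18_24, V_19_42]

lemma V_17_42 : V 17 42 = 6 := by
  rw [V_rec 17 42 (by norm_num) (by norm_num)]
  norm_num [V_17_25, V_18_42]

lemma V_16_42 : V 16 42 = 7 := by
  rw [V_rec 16 42 (by norm_num) (by norm_num)]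
  norm_num [V_16_26, V_17_42]

lemma V_15_42 : V 15 42 = 8 := by
  rw [V_rec 15 42 (by norm_num) (by norm_num)]
  norm_num [V_15_27, V_16_42]

lemma V_14_42 : V 14 42 = 10 := by
  rw [V_rec 14 42 (by norm_num) (by norm_num)]
  norm_num [V_14_28, V_15_42]

lemma V_13_42 : V 13 42 = 13 := by
  rw [V_rec 13 42 (by norm_num) (by norm_num)]
  norm_num [V_13_29, V_14_42]

lemma V_12_42 : V 12 42 = 18 := by
  rw [V_rec 12 42 (by norm_num) (by norm_num)]
  norm_num [V_12_30, V_13_42]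

lemma V_11_42 : V 11 42 = 24 := by
  rw [V_rec 11 42 (by norm_num) (by norm_num)]
  norm_num [V_11_31, V_12_42]

lemma V_10_42 : V 10 42 = 34 := by
  rw [V_rec 10 42 (by norm_num) (by norm_num)]
  norm_num [V_10_32, V_11_42]

lemma V_9_42 : V 9 42 = 50 := by
  rw [V_rec 9 42 (by norm_num) (by norm_num)]
  norm_num [V_9_33, V_10_42]

lemma V_8_42 : V 8 42 = 77 := by
  rw [V_rec 8 42 (by norm_num) (by norm_num)]
  norm_num [V_8_34, V_9_42]

lemma V_7_42 : V 7 42 = 125 := by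
  rw [V_rec 7 42 (by norm_num) (by norm_num)]
  norm_num [V_7_35, V_8_42]

lemma V_6_42 : V 6 42 = 221 := by
  rw [V_rec 6 42 (by norm_num) (by norm_num)]
  norm_num [V_6_36, V_7_42]

lemma V_5_42 : V 5 42 = 423 := by
  rw [V_rec 5 42 (by norm_num) (by norm_num)]
  norm_num [V_5_37, V_6_42]

lemma V_22_43 : V 22 43 = 1 := V_one_eq 22 43 (by norm_num) (by norm_num)

lemma V_21_43 : V 21 43 = 2 := by
  rw [V_rec 21 43 (by norm_num) (by norm_num)]
  norm_num [V_21_22, V_22_43]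

lemma V_20_43 : V 20 43 = 3 := by
  rw [V_rec 20 43 (by norm_num) (by norm_num)]
  norm_num [V_20_23, V_21_43]

lemma V_19_43 : V 19 43 = 4 := by
  rw [V_rec 19 43 (by norm_num) (by norm_num)]
  norm_num [V_19_24, V_20_43]

lemma V_18_43 : V 18 43 = 5 := by
  rw [V_rec 18 43 (by norm_num) (by norm_num)]
  norm_num [V_18_25, V_19_43]

lemma V_17_43 : V 17 43 = 6 := by
  rw [V_rec 17 43 (by norm_num) (by norm_num)]
  norm_num [V_17_26, V_18_43]

lemma V_16_43 : V 16 43 = 7 := by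
  rw [V_rec 16 43 (by norm_num) (by norm_num)]
  norm_num [V_16_27, V_17_43]

lemma V_15_43 : V 15 43 = 8 := by
  rw [V_rec 15 43 (by norm_num) (by norm_num)]
  norm_num [V_15_28, V_16_43]

lemma V_14_43 : V 14 43 = 10 := by
  rw [V_rec 14 43 (by norm_num) (by norm_num)]
  norm_num [V_14_29, V_15_43]

lemma V_13_43 : V 13 43 = 14 := by
  rw [V_rec 13 43 (by norm_num) (by norm_num)]
  norm_num [V_13_30, V_14_43]

lemma V_12_43 : V 12 43 = 19 := by
  rw [V_rec 12 43 (by norm_num) (by norm_num)]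
  norm_num [V_12_31, V_13_43]

lemma V_11_43 : V 11 43 = 26 := by
  rw [V_rec 11 43 (by norm_num) (by norm_num)]
  norm_num [V_11_32, V_12_43]

lemma V_10_43 : V 10 43 = 37 := by
  rw [V_rec 10 43 (by norm_num) (by norm_num)]
  norm_num [V_10_33, V_11_43]

lemma V_9_43 : V 9 43 = 55 := by
  rw [V_rec 9 43 (by norm_num) (by norm_num)]
  norm_num [V_9_34, V_10_43]

lemma V_8_43 : V 8 43 = 85 := by
  rw [V_rec 8 43 (by norm_num) (by norm_num)]
  norm_num [V_8_35, V_9_43]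

lemma V_7_43 : V 7 43 = 141 := by
  rw [V_rec 7 43 (by norm_num) (by norm_num)]
  norm_num [V_7_36, V_8_43]

lemma V_6_43 : V 6 43 = 248 := by
  rw [V_rec 6 43 (by norm_num) (by norm_num)]
  norm_num [V_6_37, V_7_43]

lemma V_5_43 : V 5 43 = 484 := by
  rw [V_rec 5 43 (by norm_num) (by norm_num)]
  norm_num [V_5_38, V_6_43]

lemma V_23_44 : V 23 44 = 1 := V_one_eq 23 44 (by norm_num) (by norm_num)

lemma V_22_44 : V 22 44 = 2 := by
  rw [V_rec 22 44 (by norm_num) (by norm_num)]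
  norm_num [V_22_22, V_23_44]

lemma V_21_44 : V 21 44 = 3 := by
  rw [V_rec 21 44 (by norm_num) (by norm_num)]
  norm_num [V_21_23, V_22_44]

lemma V_20_44 : V 20 44 = 4 := by
  rw [V_rec 20 44 (by norm_num) (by norm_num)]
  norm_num [V_20_24, V_21_44]

lemma V_19_44 : V 19 44 = 5 := by
  rw [V_rec 19 44 (by norm_num) (by norm_num)]
  norm_num [V_19_25, V_20_44]

lemma V_18_44 : V 18 44 = 6 := by
  rw [V_rec 18 44 (by norm_num) (by norm_num)]
  norm_num [V_18_26, V_19_44]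

lemma V_17_44 : V 17 44 = 7 := by
  rw [V_rec 17 44 (by norm_num) (by norm_num)]
  norm_num [V_17_27, V_18_44]

lemma V_16_44 : V 16 44 = 8 := by
  rw [V_rec 16 44 (by norm_num) (by norm_num)]
  norm_num [V_16_28, V_17_44]

lemma V_15_44 : V 15 44 = 9 := by
  rw [V_rec 15 44 (by norm_num) (by norm_num)]
  norm_num [V_15_29, V_16_44]

lemma V_14_44 : V 14 44 = 12 := by
  rw [V_rec 14 44 (by norm_num) (by norm_num)]
  norm_num [V_14_30, V_15_44]

lemma V_13_44 : V 13 44 = 16 := by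
  rw [V_rec 13 44 (by norm_num) (by norm_num)]
  norm_num [V_13_31, V_14_44]

lemma V_12_44 : V 12 44 = 22 := by
  rw [V_rec 12 44 (by norm_num) (by norm_num)]
  norm_num [V_12_32, V_13_44]

lemma V_11_44 : V 11 44 = 30 := by
  rw [V_rec 11 44 (by norm_num) (by norm_num)]
  norm_num [V_11_33, V_12_44]

lemma V_10_44 : V 10 44 = 43 := by
  rw [V_rec 10 44 (by norm_num) (by norm_num)]
  norm_num [V_10_34, V_11_44]

lemma V_9_44 : V 9 44 = 63 := by
  rw [V_rec 9 44 (by norm_num) (by norm_num)]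
  norm_num [V_9_35, V_10_44]

lemma V_8_44 : V 8 44 = 99 := by
  rw [V_rec 8 44 (by norm_num) (by norm_num)]
  norm_num [V_8_36, V_9_44]

lemma V_7_44 : V 7 44 = 162 := by
  rw [V_rec 7 44 (by norm_num) (by norm_num)]
  norm_num [V_7_37, V_8_44]

lemma V_6_44 : V 6 44 = 288 := by
  rw [V_rec 6 44 (by norm_num) (by norm_num)]
  norm_num [V_6_38, V_7_44]

lemma V_5_44 : V 5 44 = 560 := by
  rw [V_rec 5 44 (by norm_num) (by norm_num)]
  norm_num [V_5_39, V_6_44]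

lemma V_23_45 : V 23 45 = 1 := V_one_eq 23 45 (by norm_num) (by norm_num)

lemma V_22_45 : V 22 45 = 2 := by
  rw [V_rec 22 45 (by norm_num) (by norm_num)]
  norm_num [V_22_23, V_23_45]

lemma V_21_45 : V 21 45 = 3 := by
  rw [V_rec 21 45 (by norm_num) (by norm_num)]
  norm_num [V_21_24, V_22_45]

lemma V_20_45 : V 20 45 = 4 := by
  rw [V_rec 20 45 (by norm_num) (by norm_num)]
  norm_num [V_20_25, V_21_45]

lemma V_19_45 : V 19 45 = 5 := by
  rw [V_rec 19 45 (by norm_num) (by norm_num)]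
  norm_num [V_19_26, V_20_45]

lemma V_18_45 : V 18 45 = 6 := by
  rw [V_rec 18 45 (by norm_num) (by norm_num)]
  norm_num [V_18_27, V_19_45]

lemma V_17_45 : V 17 45 = 7 := by
  rw [V_rec 17 45 (by norm_num) (by norm_num)]
  norm_num [V_17_28, V_18_45]

lemma V_16_45 : V 16 45 = 8 := by
  rw [V_rec 16 45 (by norm_num) (by norm_num)]
  norm_num [V_16_29, V_17_45]

lemma V_15_45 : V 15 45 = 10 := by
  rw [V_rec 15 45 (by norm_num) (by norm_num)]
  norm_num [V_15_30, V_16_45]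

lemma V_14_45 : V 14 45 = 13 := by
  rw [V_rec 14 45 (by norm_num) (by norm_num)]
  norm_num [V_14_31, V_15_45]

lemma V_13_45 : V 13 45 = 18 := by
  rw [V_rec 13 45 (by norm_num) (by norm_num)]
  norm_num [V_13_32, V_14_45]

lemma V_12_45 : V 12 45 = 24 := by
  rw [V_rec 12 45 (by norm_num) (by norm_num)]
  norm_num [V_12_33, V_13_45]

lemma V_11_45 : V 11 45 = 33 := by
  rw [V_rec 11 45 (by norm_num) (by norm_num)]
  norm_num [V_11_34, V_12_45]

lemma V_10_45 : V 10 45 = 47 := by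
  rw [V_rec 10 45 (by norm_num) (by norm_num)]
  norm_num [V_10_35, V_11_45]

lemma V_9_45 : V 9 45 = 71 := by
  rw [V_rec 9 45 (by norm_num) (by norm_num)]
  norm_num [V_9_36, V_10_45]

lemma V_8_45 : V 8 45 = 110 := by
  rw [V_rec 8 45 (by norm_num) (by norm_num)]
  norm_num [V_8_37, V_9_45]

lemma V_7_45 : V 7 45 = 183 := by
  rw [V_rec 7 45 (by norm_num) (by norm_num)]
  norm_num [V_7_38, V_8_45]

lemma V_6_45 : V 6 45 = 326 := by
  rw [V_rec 6 45 (by norm_num) (by norm_num)]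
  norm_num [V_6_39, V_7_45]

lemma V_5_45 : V 5 45 = 643 := by
  rw [V_rec 5 45 (by norm_num) (by norm_num)]
  norm_num [V_5_40, V_6_45]

lemma V_24_46 : V 24 46 = 1 := V_one_eq 24 46 (by norm_num) (by norm_num)

lemma V_23_46 : V 23 46 = 2 := by
  rw [V_rec 23 46 (by norm_num) (by norm_num)]
  norm_num [V_23_23, V_24_46]

lemma V_22_46 : V 22 46 = 3 := by
  rw [V_rec 22 46 (by norm_num) (by norm_num)]
  norm_num [V_22_24, V_23_46]

lemma V_21_46 : V 21 46 = 4 := by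
  rw [V_rec 21 46 (by norm_num) (by norm_num)]
  norm_num [V_21_25, V_22_46]

lemma V_20_46 : V 20 46 = 5 := by
  rw [V_rec 20 46 (by norm_num) (by norm_num)]
  norm_num [V_20_26, V_21_46]

lemma V_19_46 : V 19 46 = 6 := by
  rw [V_rec 19 46 (by norm_num) (by norm_num)]
  norm_num [V_19_27, V_20_46]

lemma V_18_46 : V 18 46 = 7 := by
  rw [V_rec 18 46 (by norm_num) (by norm_num)]
  norm_num [V_18_28, V_19_46]

lemma V_17_46 : V 17 46 = 8 := by
  rw [V_rec 17 46 (by norm_num) (by norm_num)]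
  norm_num [V_17_29, V_18_46]

lemma V_16_46 : V 16 46 = 9 := by
  rw [V_rec 16 46 (by norm_num) (by norm_num)]
  norm_num [V_16_30, V_17_46]

lemma V_15_46 : V 15 46 = 11 := by
  rw [V_rec 15 46 (by norm_num) (by norm_num)]
  norm_num [V_15_31, V_16_46]

lemma V_14_46 : V 14 46 = 15 := by
  rw [V_rec 14 46 (by norm_num) (by norm_num)]
  norm_num [V_14_32, V_15_46]

lemma V_13_46 : V 13 46 = 20 := by
  rw [V_rec 13 46 (by norm_num) (by norm_num)]
  norm_num [V_13_33, V_14_46]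

lemma V_12_46 : V 12 46 = 27 := by
  rw [V_rec 12 46 (by norm_num) (by norm_num)]
  norm_num [V_12_34, V_13_46]

lemma V_11_46 : V 11 46 = 37 := by
  rw [V_rec 11 46 (by norm_num) (by norm_num)]
  norm_num [V_11_35, V_12_46]

lemma V_10_46 : V 10 46 = 54 := by
  rw [V_rec 10 46 (by norm_num) (by norm_num)]
  norm_num [V_10_36, V_11_46]

lemma V_9_46 : V 9 46 = 80 := by
  rw [V_rec 9 46 (by norm_num) (by norm_num)]
  norm_num [V_9_37, V_10_46]

lemma V_8_46 : V 8 46 = 126 := by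
  rw [V_rec 8 46 (by norm_num) (by norm_num)]
  norm_num [V_8_38, V_9_46]

lemma V_7_46 : V 7 46 = 209 := by
  rw [V_rec 7 46 (by norm_num) (by norm_num)]
  norm_num [V_7_39, V_8_46]

lemma V_6_46 : V 6 46 = 376 := by
  rw [V_rec 6 46 (by norm_num) (by norm_num)]
  norm_num [V_6_40, V_7_46]

lemma V_24_47 : V 24 47 = 1 := V_one_eq 24 47 (by norm_num) (by norm_num)

lemma V_23_47 : V 23 47 = 2 := by
  rw [V_rec 23 47 (by norm_num) (by norm_num)]
  norm_num [V_23_24, V_24_47]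

lemma V_22_47 : V 22 47 = 3 := by
  rw [V_rec 22 47 (by norm_num) (by norm_num)]
  norm_num [V_22_25, V_23_47]

lemma V_21_47 : V 21 47 = 4 := by
  rw [V_rec 21 47 (by norm_num) (by norm_num)]
  norm_num [V_21_26, V_22_47]

lemma V_20_47 : V 20 47 = 5 := by
  rw [V_rec 20 47 (by norm_num) (by norm_num)]
  norm_num [V_20_27, V_21_47]

lemma V_19_47 : V 19 47 = 6 := by
  rw [V_rec 19 47 (by norm_num) (by norm_num)]
  norm_num [V_19_28, V_20_47]

lemma V_18_47 : V 18 47 = 7 := by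
  rw [V_rec 18 47 (by norm_num) (by norm_num)]
  norm_num [V_18_29, V_19_47]

lemma V_17_47 : V 17 47 = 8 := by
  rw [V_rec 17 47 (by norm_num) (by norm_num)]
  norm_num [V_17_30, V_18_47]

lemma V_16_47 : V 16 47 = 9 := by
  rw [V_rec 16 47 (by norm_num) (by norm_num)]
  norm_num [V_16_31, V_17_47]

lemma V_15_47 : V 15 47 = 12 := by
  rw [V_rec 15 47 (by norm_num) (by norm_num)]
  norm_num [V_15_32, V_16_47]

lemma V_14_47 : V 14 47 = 16 := by
  rw [V_rec 14 47 (by norm_num) (by norm_num)]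
  norm_num [V_14_33, V_15_47]

lemma V_13_47 : V 13 47 = 22 := by
  rw [V_rec 13 47 (by norm_num) (by norm_num)]
  norm_num [V_13_34, V_14_47]

lemma V_12_47 : V 12 47 = 29 := by
  rw [V_rec 12 47 (by norm_num) (by norm_num)]
  norm_num [V_12_35, V_13_47]

lemma V_11_47 : V 11 47 = 41 := by
  rw [V_rec 11 47 (by norm_num) (by norm_num)]
  norm_num [V_11_36, V_12_47]

lemma V_10_47 : V 10 47 = 59 := by
  rw [V_rec 10 47 (by norm_num) (by norm_num)]
  norm_num [V_10_37, V_11_47]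

lemma V_9_47 : V 9 47 = 89 := by
  rw [V_rec 9 47 (by norm_num) (by norm_num)]
  norm_num [V_9_38, V_10_47]

lemma V_8_47 : V 8 47 = 140 := by
  rw [V_rec 8 47 (by norm_num) (by norm_num)]
  norm_num [V_8_39, V_9_47]

lemma V_7_47 : V 7 47 = 236 := by
  rw [V_rec 7 47 (by norm_num) (by norm_num)]
  norm_num [V_7_40, V_8_47]

lemma V_6_47 : V 6 47 = 424 := by
  rw [V_rec 6 47 (by norm_num) (by norm_num)]
  norm_num [V_6_41, V_7_47]

lemma V_25_48 : V 25 48 = 1 := V_one_eq 25 48 (by norm_num) (by norm_num)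

lemma V_24_48 : V 24 48 = 2 := by
  rw [V_rec 24 48 (by norm_num) (by norm_num)]
  norm_num [V_24_24, V_25_48]

lemma V_23_48 : V 23 48 = 3 := by
  rw [V_rec 23 48 (by norm_num) (by norm_num)]
  norm_num [V_23_25, V_24_48]

lemma V_22_48 : V 22 48 = 4 := by
  rw [V_rec 22 48 (by norm_num) (by norm_num)]
  norm_num [V_22_26, V_23_48]

lemma V_21_48 : V 21 48 = 5 := by
  rw [V_rec 21 48 (by norm_num) (by norm_num)]
  norm_num [V_21_27, V_22_48]

lemma V_20_48 : V 20 48 = 6 := by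
  rw [V_rec 20 48 (by norm_num) (by norm_num)]
  norm_num [V_20_28, V_21_48]

lemma V_19_48 : V 19 48 = 7 := by
  rw [V_rec 19 48 (by norm_num) (by norm_num)]
  norm_num [V_19_29, V_20_48]

lemma V_18_48 : V 18 48 = 8 := by
  rw [V_rec 18 48 (by norm_num) (by norm_num)]
  norm_num [V_18_30, V_19_48]

lemma V_17_48 : V 17 48 = 9 := by
  rw [V_rec 17 48 (by norm_num) (by norm_num)]
  norm_num [V_17_31, V_18_48]

lemma V_16_48 : V 16 48 = 11 := by
  rw [V_rec 16 48 (by norm_num) (by norm_num)]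
  norm_num [V_16_32, V_17_48]

lemma V_15_48 : V 15 48 = 14 := by
  rw [V_rec 15 48 (by norm_num) (by norm_num)]
  norm_num [V_15_33, V_16_48]

lemma V_14_48 : V 14 48 = 19 := by
  rw [V_rec 14 48 (by norm_num) (by norm_num)]
  norm_num [V_14_34, V_15_48]

lemma V_13_48 : V 13 48 = 25 := by
  rw [V_rec 13 48 (by norm_num) (by norm_num)]
  norm_num [V_13_35, V_14_48]

lemma V_12_48 : V 12 48 = 34 := by
  rw [V_rec 12 48 (by norm_num) (by norm_num)]
  norm_num [V_12_36, V_13_48]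

lemma V_11_48 : V 11 48 = 47 := by
  rw [V_rec 11 48 (by norm_num) (by norm_num)]
  norm_num [V_11_37, V_12_48]

lemma V_10_48 : V 10 48 = 68 := by
  rw [V_rec 10 48 (by norm_num) (by norm_num)]
  norm_num [V_10_38, V_11_48]

lemma V_9_48 : V 9 48 = 102 := by
  rw [V_rec 9 48 (by norm_num) (by norm_num)]
  norm_num [V_9_39, V_10_48]

lemma V_8_48 : V 8 48 = 162 := by
  rw [V_rec 8 48 (by norm_num) (by norm_num)]
  norm_num [V_8_40, V_9_48]

lemma V_7_48 : V 7 48 = 270 := by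
  rw [V_rec 7 48 (by norm_num) (by norm_num)]
  norm_num [V_7_41, V_8_48]

lemma V_6_48 : V 6 48 = 491 := by
  rw [V_rec 6 48 (by norm_num) (by norm_num)]
  norm_num [V_6_42, V_7_48]

lemma V_25_49 : V 25 49 = 1 := V_one_eq 25 49 (by norm_num) (by norm_num)

lemma V_24_49 : V 24 49 = 2 := by
  rw [V_rec 24 49 (by norm_num) (by norm_num)]
  norm_num [V_24_25, V_25_49]

lemma V_23_49 : V 23 49 = 3 := by
  rw [V_rec 23 49 (by norm_num) (by norm_num)]
  norm_num [V_23_26, V_24_49]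

lemma V_22_49 : V 22 49 = 4 := by
  rw [V_rec 22 49 (by norm_num) (by norm_num)]
  norm_num [V_22_27, V_23_49]

lemma V_21_49 : V 21 49 = 5 := by
  rw [V_rec 21 49 (by norm_num) (by norm_num)]
  norm_num [V_21_28, V_22_49]

lemma V_20_49 : V 20 49 = 6 := by
  rw [V_rec 20 49 (by norm_num) (by norm_num)]
  norm_num [V_20_29, V_21_49]

lemma V_19_49 : V 19 49 = 7 := by
  rw [V_rec 19 49 (by norm_num) (by norm_num)]
  norm_num [V_19_30, V_20_49]

lemma V_18_49 : V 18 49 = 8 := by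
  rw [V_rec 18 49 (by norm_num) (by norm_num)]
  norm_num [V_18_31, V_19_49]

lemma V_17_49 : V 17 49 = 9 := by
  rw [V_rec 17 49 (by norm_num) (by norm_num)]
  norm_num [V_17_32, V_18_49]

lemma V_16_49 : V 16 49 = 11 := by
  rw [V_rec 16 49 (by norm_num) (by norm_num)]
  norm_num [V_16_33, V_17_49]

lemma V_15_49 : V 15 49 = 15 := by
  rw [V_rec 15 49 (by norm_num) (by norm_num)]
  norm_num [V_15_34, V_16_49]

lemma V_14_49 : V 14 49 = 20 := by
  rw [V_rec 14 49 (by norm_num) (by norm_num)]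
  norm_num [V_14_35, V_15_49]

lemma V_13_49 : V 13 49 = 27 := by
  rw [V_rec 13 49 (by norm_num) (by norm_num)]
  norm_num [V_13_36, V_14_49]

lemma V_12_49 : V 12 49 = 36 := by
  rw [V_rec 12 49 (by norm_num) (by norm_num)]
  norm_num [V_12_37, V_13_49]

lemma V_11_49 : V 11 49 = 51 := by
  rw [V_rec 11 49 (by norm_num) (by norm_num)]
  norm_num [V_11_38, V_12_49]

lemma V_10_49 : V 10 49 = 74 := by
  rw [V_rec 10 49 (by norm_num) (by norm_num)]
  norm_num [V_10_39, V_11_49]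

lemma V_9_49 : V 9 49 = 113 := by
  rw [V_rec 9 49 (by norm_num) (by norm_num)]
  norm_num [V_9_40, V_10_49]

lemma V_8_49 : V 8 49 = 179 := by
  rw [V_rec 8 49 (by norm_num) (by norm_num)]
  norm_num [V_8_41, V_9_49]

lemma V_7_49 : V 7 49 = 304 := by
  rw [V_rec 7 49 (by norm_num) (by norm_num)]
  norm_num [V_7_42, V_8_49]

lemma V_6_49 : V 6 49 = 552 := by
  rw [V_rec 6 49 (by norm_num) (by norm_num)]
  norm_num [V_6_43, V_7_49]

lemma V_26_50 : V 26 50 = 1 := V_one_eq 26 50 (by norm_num) (by norm_num)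

lemma V_25_50 : V 25 50 = 2 := by
  rw [V_rec 25 50 (by norm_num) (by norm_num)]
  norm_num [V_25_25, V_26_50]

lemma V_24_50 : V 24 50 = 3 := by
  rw [V_rec 24 50 (by norm_num) (by norm_num)]
  norm_num [V_24_26, V_25_50]

lemma V_23_50 : V 23 50 = 4 := by
  rw [V_rec 23 50 (by norm_num) (by norm_num)]
  norm_num [V_23_27, V_24_50]

lemma V_22_50 : V 22 50 = 5 := by
  rw [V_rec 22 50 (by norm_num) (by norm_num)]
  norm_num [V_22_28, V_23_50]

lemma V_21_50 : V 21 50 = 6 := by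
  rw [V_rec 21 50 (by norm_num) (by norm_num)]
  norm_num [V_21_29, V_22_50]

lemma V_20_50 : V 20 50 = 7 := by
  rw [V_rec 20 50 (by norm_num) (by norm_num)]
  norm_num [V_20_30, V_21_50]

lemma V_19_50 : V 19 50 = 8 := by
  rw [V_rec 19 50 (by norm_num) (by norm_num)]
  norm_num [V_19_31, V_20_50]

lemma V_18_50 : V 18 50 = 9 := by
  rw [V_rec 18 50 (by norm_num) (by norm_num)]
  norm_num [V_18_32, V_19_50]

lemma V_17_50 : V 17 50 = 10 := by
  rw [V_rec 17 50 (by norm_num) (by norm_num)]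
  norm_num [V_17_33, V_18_50]

lemma V_16_50 : V 16 50 = 13 := by
  rw [V_rec 16 50 (by norm_num) (by norm_num)]
  norm_num [V_16_34, V_17_50]

lemma V_15_50 : V 15 50 = 17 := by
  rw [V_rec 15 50 (by norm_num) (by norm_num)]
  norm_num [V_15_35, V_16_50]

lemma V_14_50 : V 14 50 = 23 := by
  rw [V_rec 14 50 (by norm_num) (by norm_num)]
  norm_num [V_14_36, V_15_50]

lemma V_13_50 : V 13 50 = 30 := by
  rw [V_rec 13 50 (by norm_num) (by norm_num)]
  norm_num [V_13_37, V_14_50]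

lemma V_12_50 : V 12 50 = 41 := by
  rw [V_rec 12 50 (by norm_num) (by norm_num)]
  norm_num [V_12_38, V_13_50]

lemma V_11_50 : V 11 50 = 58 := by
  rw [V_rec 11 50 (by norm_num) (by norm_num)]
  norm_num [V_11_39, V_12_50]

lemma V_10_50 : V 10 50 = 85 := by
  rw [V_rec 10 50 (by norm_num) (by norm_num)]
  norm_num [V_10_40, V_11_50]

lemma V_9_50 : V 9 50 = 128 := by
  rw [V_rec 9 50 (by norm_num) (by norm_num)]
  norm_num [V_9_41, V_10_50]

lemma V_8_50 : V 8 50 = 205 := by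
  rw [V_rec 8 50 (by norm_num) (by norm_num)]
  norm_num [V_8_42, V_9_50]

lemma V_7_50 : V 7 50 = 346 := by
  rw [V_rec 7 50 (by norm_num) (by norm_num)]
  norm_num [V_7_43, V_8_50]

lemma V_6_50 : V 6 50 = 634 := by
  rw [V_rec 6 50 (by norm_num) (by norm_num)]
  norm_num [V_6_44, V_7_50]

lemma V_26_51 : V 26 51 = 1 := V_one_eq 26 51 (by norm_num) (by norm_num)

lemma V_25_51 : V 25 51 = 2 := by
  rw [V_rec 25 51 (by norm_num) (by norm_num)]
  norm_num [V_25_26, V_26_51]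

lemma V_24_51 : V 24 51 = 3 := by
  rw [V_rec 24 51 (by norm_num) (by norm_num)]
  norm_num [V_24_27, V_25_51]

lemma V_23_51 : V 23 51 = 4 := by
  rw [V_rec 23 51 (by norm_num) (by norm_num)]
  norm_num [V_23_28, V_24_51]

lemma V_22_51 : V 22 51 = 5 := by
  rw [V_rec 22 51 (by norm_num) (by norm_num)]
  norm_num [V_22_29, V_23_51]

lemma V_21_51 : V 21 51 = 6 := by
  rw [V_rec 21 51 (by norm_num) (by norm_num)]
  norm_num [V_21_30, V_22_51]

lemma V_20_51 : V 20 51 = 7 := by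
  rw [V_rec 20 51 (by norm_num) (by norm_num)]
  norm_num [V_20_31, V_21_51]

lemma V_19_51 : V 19 51 = 8 := by
  rw [V_rec 19 51 (by norm_num) (by norm_num)]
  norm_num [V_19_32, V_20_51]

lemma V_18_51 : V 18 51 = 9 := by
  rw [V_rec 18 51 (by norm_num) (by norm_num)]
  norm_num [V_18_33, V_19_51]

lemma V_17_51 : V 17 51 = 11 := by
  rw [V_rec 17 51 (by norm_num) (by norm_num)]
  norm_num [V_17_34, V_18_51]

lemma V_16_51 : V 16 51 = 14 := by
  rw [V_rec 16 51 (by norm_num) (by norm_num)]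
  norm_num [V_16_35, V_17_51]

lemma V_15_51 : V 15 51 = 19 := by
  rw [V_rec 15 51 (by norm_num) (by norm_num)]
  norm_num [V_15_36, V_16_51]

lemma V_14_51 : V 14 51 = 25 := by
  rw [V_rec 14 51 (by norm_num) (by norm_num)]
  norm_num [V_14_37, V_15_51]

lemma V_13_51 : V 13 51 = 33 := by
  rw [V_rec 13 51 (by norm_num) (by norm_num)]
  norm_num [V_13_38, V_14_51]

lemma V_12_51 : V 12 51 = 45 := by
  rw [V_rec 12 51 (by norm_num) (by norm_num)]
  norm_num [V_12_39, V_13_51]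

lemma V_11_51 : V 11 51 = 64 := by
  rw [V_rec 11 51 (by norm_num) (by norm_num)]
  norm_num [V_11_40, V_12_51]

lemma V_10_51 : V 10 51 = 93 := by
  rw [V_rec 10 51 (by norm_num) (by norm_num)]
  norm_num [V_10_41, V_11_51]

lemma V_9_51 : V 9 51 = 143 := by
  rw [V_rec 9 51 (by norm_num) (by norm_num)]
  norm_num [V_9_42, V_10_51]

lemma V_8_51 : V 8 51 = 228 := by
  rw [V_rec 8 51 (by norm_num) (by norm_num)]
  norm_num [V_8_43, V_9_51]

lemma V_7_51 : V 7 51 = 390 := by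
  rw [V_rec 7 51 (by norm_num) (by norm_num)]
  norm_num [V_7_44, V_8_51]

lemma V_6_51 : V 6 51 = 716 := by
  rw [V_rec 6 51 (by norm_num) (by norm_num)]
  norm_num [V_6_45, V_7_51]

lemma V_27_52 : V 27 52 = 1 := V_one_eq 27 52 (by norm_num) (by norm_num)

lemma V_26_52 : V 26 52 = 2 := by
  rw [V_rec 26 52 (by norm_num) (by norm_num)]
  norm_num [V_26_26, V_27_52]

lemma V_25_52 : V 25 52 = 3 := by
  rw [V_rec 25 52 (by norm_num) (by norm_num)]
  norm_num [V_25_27, V_26_52]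

lemma V_24_52 : V 24 52 = 4 := by
  rw [V_rec 24 52 (by norm_num) (by norm_num)]
  norm_num [V_24_28, V_25_52]

lemma V_23_52 : V 23 52 = 5 := by
  rw [V_rec 23 52 (by norm_num) (by norm_num)]
  norm_num [V_23_29, V_24_52]

lemma V_22_52 : V 22 52 = 6 := by
  rw [V_rec 22 52 (by norm_num) (by norm_num)]
  norm_num [V_22_30, V_23_52]

lemma V_21_52 : V 21 52 = 7 := by
  rw [V_rec 21 52 (by norm_num) (by norm_num)]
  norm_num [V_21_31, V_22_52]

lemma V_20_52 : V 20 52 = 8 := by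
  rw [V_rec 20 52 (by norm_num) (by norm_num)]
  norm_num [V_20_32, V_21_52]

lemma V_19_52 : V 19 52 = 9 := by
  rw [V_rec 19 52 (by norm_num) (by norm_num)]
  norm_num [V_19_33, V_20_52]

lemma V_18_52 : V 18 52 = 10 := by
  rw [V_rec 18 52 (by norm_num) (by norm_num)]
  norm_num [V_18_34, V_19_52]

lemma V_17_52 : V 17 52 = 12 := by
  rw [V_rec 17 52 (by norm_num) (by norm_num)]
  norm_num [V_17_35, V_18_52]

lemma V_16_52 : V 16 52 = 16 := by
  rw [V_rec 16 52 (by norm_num) (by norm_num)]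
  norm_num [V_16_36, V_17_52]

lemma V_15_52 : V 15 52 = 21 := by
  rw [V_rec 15 52 (by norm_num) (by norm_num)]
  norm_num [V_15_37, V_16_52]

lemma V_14_52 : V 14 52 = 28 := by
  rw [V_rec 14 52 (by norm_num) (by norm_num)]
  norm_num [V_14_38, V_15_52]

lemma V_13_52 : V 13 52 = 37 := by
  rw [V_rec 13 52 (by norm_num) (by norm_num)]
  norm_num [V_13_39, V_14_52]

lemma V_12_52 : V 12 52 = 51 := by
  rw [V_rec 12 52 (by norm_num) (by norm_num)]
  norm_num [V_12_40, V_13_52]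

lemma V_11_52 : V 11 52 = 72 := by
  rw [V_rec 11 52 (by norm_num) (by norm_num)]
  norm_num [V_11_41, V_12_52]

lemma V_10_52 : V 10 52 = 106 := by
  rw [V_rec 10 52 (by norm_num) (by norm_num)]
  norm_num [V_10_42, V_11_52]

lemma V_9_52 : V 9 52 = 161 := by
  rw [V_rec 9 52 (by norm_num) (by norm_num)]
  norm_num [V_9_43, V_10_52]

lemma V_8_52 : V 8 52 = 260 := by
  rw [V_rec 8 52 (by norm_num) (by norm_num)]
  norm_num [V_8_44, V_9_52]

lemma V_7_52 : V 7 52 = 443 := by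
  rw [V_rec 7 52 (by norm_num) (by norm_num)]
  norm_num [V_7_45, V_8_52]

lemma V_6_52 : V 6 52 = 819 := by
  rw [V_rec 6 52 (by norm_num) (by norm_num)]
  norm_num [V_6_46, V_7_52]

lemma V_27_53 : V 27 53 = 1 := V_one_eq 27 53 (by norm_num) (by norm_num)

lemma V_26_53 : V 26 53 = 2 := by
  rw [V_rec 26 53 (by norm_num) (by norm_num)]
  norm_num [V_26_27, V_27_53]

lemma V_25_53 : V 25 53 = 3 := by
  rw [V_rec 25 53 (by norm_num) (by norm_num)]
  norm_num [V_25_28, V_26_53]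

lemma V_24_53 : V 24 53 = 4 := by
  rw [V_rec 24 53 (by norm_num) (by norm_num)]
  norm_num [V_24_29, V_25_53]

lemma V_23_53 : V 23 53 = 5 := by
  rw [V_rec 23 53 (by norm_num) (by norm_num)]
  norm_num [V_23_30, V_24_53]

lemma V_22_53 : V 22 53 = 6 := by
  rw [V_rec 22 53 (by norm_num) (by norm_num)]
  norm_num [V_22_31, V_23_53]

lemma V_21_53 : V 21 53 = 7 := by
  rw [V_rec 21 53 (by norm_num) (by norm_num)]
  norm_num [V_21_32, V_22_53]

lemma V_20_53 : V 20 53 = 8 := by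
  rw [V_rec 20 53 (by norm_num) (by norm_num)]
  norm_num [V_20_33, V_21_53]

lemma V_19_53 : V 19 53 = 9 := by
  rw [V_rec 19 53 (by norm_num) (by norm_num)]
  norm_num [V_19_34, V_20_53]

lemma V_18_53 : V 18 53 = 10 := by
  rw [V_rec 18 53 (by norm_num) (by norm_num)]
  norm_num [V_18_35, V_19_53]

lemma V_17_53 : V 17 53 = 13 := by
  rw [V_rec 17 53 (by norm_num) (by norm_num)]
  norm_num [V_17_36, V_18_53]

lemma V_16_53 : V 16 53 = 17 := by
  rw [V_rec 16 53 (by norm_num) (by norm_num)]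
  norm_num [V_16_37, V_17_53]

lemma V_15_53 : V 15 53 = 23 := by
  rw [V_rec 15 53 (by norm_num) (by norm_num)]
  norm_num [V_15_38, V_16_53]

lemma V_14_53 : V 14 53 = 30 := by
  rw [V_rec 14 53 (by norm_num) (by norm_num)]
  norm_num [V_14_39, V_15_53]

lemma V_13_53 : V 13 53 = 40 := by
  rw [V_rec 13 53 (by norm_num) (by norm_num)]
  norm_num [V_13_40, V_14_53]

lemma V_12_53 : V 12 53 = 55 := by
  rw [V_rec 12 53 (by norm_num) (by norm_num)]
  norm_num [V_12_41, V_13_53]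

lemma V_11_53 : V 11 53 = 79 := by
  rw [V_rec 11 53 (by norm_num) (by norm_num)]
  norm_num [V_11_42, V_12_53]

lemma V_10_53 : V 10 53 = 116 := by
  rw [V_rec 10 53 (by norm_num) (by norm_num)]
  norm_num [V_10_43, V_11_53]

lemma V_9_53 : V 9 53 = 179 := by
  rw [V_rec 9 53 (by norm_num) (by norm_num)]
  norm_num [V_9_44, V_10_53]

lemma V_8_53 : V 8 53 = 289 := by
  rw [V_rec 8 53 (by norm_num) (by norm_num)]
  norm_num [V_8_45, V_9_53]

lemma V_7_53 : V 7 53 = 498 := by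
  rw [V_rec 7 53 (by norm_num) (by norm_num)]
  norm_num [V_7_46, V_8_53]


lemma S_2_eq (n : ℕ) : S 2 n = V 2 (n - 1) + V 2 (n - 2) := by
  rw [S, Finset.sum_range_succ, Finset.sum_range_succ, Finset.sum_range_zero]
  rw [show n - 1 - 1 = n - 2 by omega]
  simp


lemma S_3_eq (n : ℕ) : S 3 n = V 3 (n - 1) + V 3 (n - 2) + V 3 (n - 3) := by
  rw [S, Finset.sum_range_succ, Finset.sum_range_succ, Finset.sum_range_succ, Finset.sum_range_zero]
  rw [show n - 1 - 1 = n - 2 by omega, show n - 1 - 2 = n - 3 by omega]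
  simp

lemma S_4_eq (n : ℕ) : S 4 n = V 4 (n - 1) + V 4 (n - 2) + V 4 (n - 3) + V 4 (n - 4) := by
  rw [S, Finset.sum_range_succ, Finset.sum_range_succ, Finset.sum_range_succ, Finset.sum_range_succ, Finset.sum_range_zero]
  rw [show n - 1 - 1 = n - 2 by omega, show n - 1 - 2 = n - 3 by omega, show n - 1 - 3 = n - 4 by omega]
  simp

lemma S_5_eq (n : ℕ) : S 5 n = V 5 (n - 1) + V 5 (n - 2) + V 5 (n - 3) + V 5 (n - 4) + V 5 (n - 5) := by
  rw [S, Finset.sum_range_succ, Finset.sum_range_succ, Finset.sum_range_succ, Finset.sum_range_succ, Finset.sum_range_succ, Finset.sum_range_zero]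
  rw [show n - 1 - 1 = n - 2 by omega, show n - 1 - 2 = n - 3 by omega, show n - 1 - 3 = n - 4 by omega, show n - 1 - 4 = n - 5 by omega]
  simp

lemma S_6_eq (n : ℕ) : S 6 n = V 6 (n - 1) + V 6 (n - 2) + V 6 (n - 3) + V 6 (n - 4) + V 6 (n - 5) + V 6 (n - 6) := by
  rw [S, Finset.sum_range_succ, Finset.sum_range_succ, Finset.sum_range_succ, Finset.sum_range_succ, Finset.sum_range_succ, Finset.sum_range_succ, Finset.sum_range_zero]
  rw [show n - 1 - 1 = n - 2 by omega, show n - 1 - 2 = n - 3 by omega, show n - 1 - 3 = n - 4 by omega, show n - 1 - 4 = n - 5 by omega, show n - 1 - 5 = n - 6 by omega]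
  simp

lemma I_2_29 : I 2 29 := by
  rw [I, S_2_eq]
  norm_num [V_3_29, V_2_28, V_2_27]

lemma I_2_30 : I 2 30 := by
  rw [I, S_2_eq]
  norm_num [V_3_30, V_2_29, V_2_28]

lemma I_2_31 : I 2 31 := by
  rw [I, S_2_eq]
  norm_num [V_3_31, V_2_30, V_2_29]

lemma I_3_32 : I 3 32 := by
  rw [I, S_3_eq]
  norm_num [V_4_32, V_3_31, V_3_30, V_3_29]

lemma I_3_33 : I 3 33 := by
  rw [I, S_3_eq]
  norm_num [V_4_33, V_3_32, V_3_31, V_3_30]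

lemma I_3_34 : I 3 34 := by
  rw [I, S_3_eq]
  norm_num [V_4_34, V_3_33, V_3_32, V_3_31]

lemma I_3_35 : I 3 35 := by
  rw [I, S_3_eq]
  norm_num [V_4_35, V_3_34, V_3_33, V_3_32]

lemma I_4_36 : I 4 36 := by
  rw [I, S_4_eq]
  norm_num [V_5_36, V_4_35, V_4_34, V_4_33, V_4_32]

lemma I_4_37 : I 4 37 := by
  rw [I, S_4_eq]
  norm_num [V_5_37, V_4_36, V_4_35, V_4_34, V_4_33]

lemma I_4_38 : I 4 38 := by
  rw [I, S_4_eq]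
  norm_num [V_5_38, V_4_37, V_4_36, V_4_35, V_4_34]

lemma I_4_39 : I 4 39 := by
  rw [I, S_4_eq]
  norm_num [V_5_39, V_4_38, V_4_37, V_4_36, V_4_35]

lemma I_4_40 : I 4 40 := by
  rw [I, S_4_eq]
  norm_num [V_5_40, V_4_39, V_4_38, V_4_37, V_4_36]

lemma I_5_41 : I 5 41 := by
  rw [I, S_5_eq]
  norm_num [V_6_41, V_5_40, V_5_39, V_5_38, V_5_37, V_5_36]

lemma I_5_42 : I 5 42 := by
  rw [I, S_5_eq]
  norm_num [V_6_42, V_5_41, V_5_40, V_5_39, V_5_38, V_5_37]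

lemma I_5_43 : I 5 43 := by
  rw [I, S_5_eq]
  norm_num [V_6_43, V_5_42, V_5_41, V_5_40, V_5_39, V_5_38]

lemma I_5_44 : I 5 44 := by
  rw [I, S_5_eq]
  norm_num [V_6_44, V_5_43, V_5_42, V_5_41, V_5_40, V_5_39]

lemma I_5_45 : I 5 45 := by
  rw [I, S_5_eq]
  norm_num [V_6_45, V_5_44, V_5_43, V_5_42, V_5_41, V_5_40]

lemma I_5_46 : I 5 46 := by
  rw [I, S_5_eq]
  norm_num [V_6_46, V_5_45, V_5_44, V_5_43, V_5_42, V_5_41]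

lemma I_6_47 : I 6 47 := by
  rw [I, S_6_eq]
  norm_num [V_7_47, V_6_46, V_6_45, V_6_44, V_6_43, V_6_42, V_6_41]

lemma I_6_48 : I 6 48 := by
  rw [I, S_6_eq]
  norm_num [V_7_48, V_6_47, V_6_46, V_6_45, V_6_44, V_6_43, V_6_42]

lemma I_6_49 : I 6 49 := by
  rw [I, S_6_eq]
  norm_num [V_7_49, V_6_48, V_6_47, V_6_46, V_6_45, V_6_44, V_6_43]

lemma I_6_50 : I 6 50 := by
  rw [I, S_6_eq]
  norm_num [V_7_50, V_6_49, V_6_48, V_6_47, V_6_46, V_6_45, V_6_44]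

lemma I_6_51 : I 6 51 := by
  rw [I, S_6_eq]
  norm_num [V_7_51, V_6_50, V_6_49, V_6_48, V_6_47, V_6_46, V_6_45]

lemma I_6_52 : I 6 52 := by
  rw [I, S_6_eq]
  norm_num [V_7_52, V_6_51, V_6_50, V_6_49, V_6_48, V_6_47, V_6_46]

lemma I_6_53 : I 6 53 := by
  rw [I, S_6_eq]
  norm_num [V_7_53, V_6_52, V_6_51, V_6_50, V_6_49, V_6_48, V_6_47]


lemma I_step (k n : ℕ) (hk : 1 ≤ k) (hn : 2 * k + 1 ≤ n)
    (h1 : I k (n - (k + 1))) (h2 : I (k + 1) n) : I k n := by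
  rw [I] at h1 h2 ⊢
  rw [V_rec (k + 1) n (by omega) (by omega)]
  rw [S_rec k n (by omega) (by omega)]
  omega

theorem I_6 (n : ℕ) (hn : 47 ≤ n) : I 6 n := by
  rcases Nat.lt_or_ge n 54 with h | h
  · interval_cases n
    exacts [I_6_47, I_6_48, I_6_49, I_6_50, I_6_51, I_6_52, I_6_53]
  · exact I_step 6 n (by norm_num) (by omega) (I_6 (n - 7) (by omega))
      (I_high 7 n (by norm_num) (by omega))
termination_by n

theorem I_5 (n : ℕ) (hn : 41 ≤ n) : I 5 n := by
  rcases Nat.lt_or_ge n 47 with h | h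
  · interval_cases n
    exacts [I_5_41, I_5_42, I_5_43, I_5_44, I_5_45, I_5_46]
  · exact I_step 5 n (by norm_num) (by omega) (I_5 (n - 6) (by omega)) (I_6 n (by omega))
termination_by n

theorem I_4 (n : ℕ) (hn : 36 ≤ n) : I 4 n := by
  rcases Nat.lt_or_ge n 41 with h | h
  · interval_cases n
    exacts [I_4_36, I_4_37, I_4_38, I_4_39, I_4_40]
  · exact I_step 4 n (by norm_num) (by omega) (I_4 (n - 5) (by omega)) (I_5 n (by omega))
termination_by n

theorem I_3 (n : ℕ) (hn : 32 ≤ n) : I 3 n := by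
  rcases Nat.lt_or_ge n 36 with h | h
  · interval_cases n
    exacts [I_3_32, I_3_33, I_3_34, I_3_35]
  · exact I_step 3 n (by norm_num) (by omega) (I_3 (n - 4) (by omega)) (I_4 n (by omega))
termination_by n

theorem I_2 (n : ℕ) (hn : 29 ≤ n) : I 2 n := by
  rcases Nat.lt_or_ge n 32 with h | h
  · interval_cases n
    exacts [I_2_29, I_2_30, I_2_31]
  · exact I_step 2 n (by norm_num) (by omega) (I_2 (n - 3) (by omega)) (I_3 n (by omega))
termination_by n

theorem mainV (n : ℕ) (hn : 27 ≤ n) : 1218 * V 2 n ≤ 287 * V 1 (n - 1) := by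
  rcases Nat.lt_or_ge n 29 with h | h
  · interval_cases n
    · rw [V_2_27, show (27 : ℕ) - 1 = 26 by norm_num, V_1_26]
    · rw [V_2_28, show (28 : ℕ) - 1 = 27 by norm_num, V_1_27]
      norm_num
  · have ih : 1218 * V 2 (n - 2) ≤ 287 * V 1 (n - 3) := by
      have := mainV (n - 2) (by omega)
      rwa [show n - 2 - 1 = n - 3 by omega] at this
    have h2 : I 2 n := I_2 n h
    rw [I, S_2_eq] at h2
    have e1 : V 2 n = V 2 (n - 2) + V 3 n := by
      rw [V_rec 2 n (by omega) (by omega)]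
    have e2 : V 1 (n - 1) = V 1 (n - 2) + V 2 (n - 1) := by
      rw [V_rec 1 (n - 1) (by omega) (by omega), show n - 1 - 1 = n - 2 by omega]
    have e3 : V 1 (n - 2) = V 1 (n - 3) + V 2 (n - 2) := by
      rw [V_rec 1 (n - 2) (by omega) (by omega), show n - 2 - 1 = n - 3 by omega]
    have h3 : (2 : ℕ) + 1 = 3 := rfl
    rw [h3] at h2
    omega
termination_by n



lemma p_rec (n : ℕ) (hn : 1 ≤ n) : p n = p (n - 1) + V 2 n := by
  rw [← V_one, ← V_one, V_rec 1 n (by omega) (by omega)]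

theorem stmt8 (n : ℕ) (hn : 27 ≤ n) :
    p 26 * p n ≤ p 27 * p (n - 1) := by
  have h26 : p 26 = 2436 := by rw [← V_one]; exact V_1_26
  have h27 : p 27 = 3010 := by rw [← V_one]; exact V_1_27
  have hm := mainV n hn
  rw [V_one] at hm
  have hp : p n = p (n - 1) + V 2 n := p_rec n (by omega)
  rw [h26, h27, hp]
  omega
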